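/- arXiv:1212.0360 — 11 statements merged into one kernel-verified Lean document; each statement's English description precedes it below -/
import Mathlib

section
/- Let A be a bounded antilinear operator on a complex Hilbert space H. Then the spectrum σ(A) (the set of λ ∈ ℂ such that λI − A is not boundedly invertible as a real-linear operator) is circularly symmetric with respect to the origin. -/
open Complex

/-- The spectrum of a bounded antilinear operator (as a real-linear operator)
is circularly symmetric with respect to the origin. -/
theorem stmt2 {H : Type*} [NormedAddCommGroup H] [InnerProductSpace ℂ H] [CompleteSpace H]
    (A : H →L[ℝ] H)
    (hA : ∀ (c : ℂ) (x : H), A (c • x) = (starRingEnd ℂ c) • A x)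
    (l : ℂ)
    (hl : ¬ IsUnit (l • (ContinuousLinearMap.id ℝ H) - A)) (θ : ℝ) :
    ¬ IsUnit ((Complex.exp (θ * Complex.I) * l) • (ContinuousLinearMap.id ℝ H) - A) := by
  intro h
  apply hl
  set u : ℂ := Complex.exp ((θ / 2 : ℝ) * Complex.I) with hu
  have hune : u ≠ 0 := Complex.exp_ne_zero _
  have hconj : u * (starRingEnd ℂ) u = 1 := by
    rw [hu, ← Complex.exp_conj, ← Complex.exp_add]
    have : ((θ / 2 : ℝ) : ℂ) * Complex.I + (starRingEnd ℂ) (((θ / 2 : ℝ) : ℂ) * Complex.I) = 0 := by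
      rw [map_mul, Complex.conj_I, Complex.conj_ofReal]; ring
    rw [this, Complex.exp_zero]
  have huu : u * u = Complex.exp ((θ : ℂ) * Complex.I) := by
    rw [hu, ← Complex.exp_add]
    push_cast
    ring_nf
  -- the scalar multiplication operator
  let S : ℂ → (H →L[ℝ] H) := fun c => c • ContinuousLinearMap.id ℝ H
  have hSunit : IsUnit (S u) := by
    refine ⟨⟨S u, S u⁻¹, ?_, ?_⟩, rfl⟩ <;>
    · ext x
      simp only [S, ContinuousLinearMap.mul_apply, ContinuousLinearMap.smul_apply,
        ContinuousLinearMap.id_apply, ContinuousLinearMap.one_apply, smul_smul]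
      first
        | (rw [mul_inv_cancel₀ hune]; simp)
        | (rw [inv_mul_cancel₀ hune]; simp)
  have key : S u * (l • (ContinuousLinearMap.id ℝ H) - A) * S u =
      (Complex.exp (θ * Complex.I) * l) • (ContinuousLinearMap.id ℝ H) - A := by
    ext x
    simp only [S, ContinuousLinearMap.mul_apply, ContinuousLinearMap.smul_apply,
      ContinuousLinearMap.sub_apply, ContinuousLinearMap.id_apply, hA, smul_sub, smul_smul]
    rw [hconj, one_smul]
    congr 1
    rw [show u * (l * u) = u * u * l by ring, huu]
  obtain ⟨v, hv⟩ := hSunit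
  have : l • (ContinuousLinearMap.id ℝ H) - A =
      ↑v⁻¹ * ((Complex.exp (θ * Complex.I) * l) • (ContinuousLinearMap.id ℝ H) - A) * ↑v⁻¹ := by
    rw [← key, ← hv]
    rw [← mul_assoc, ← mul_assoc, v.inv_mul, one_mul, mul_assoc, v.mul_inv, mul_one]
  rw [this]
  exact ((v⁻¹.isUnit.mul h).mul v⁻¹.isUnit)
end

section
/- Let A be a bounded antilinear operator on a complex Hilbert space H. Then λ ∈ σ(A) if and only if |λ|² ∈ σ(A²), where A² is a bounded complex linear operator. -/
open Complex

/-- For a bounded antilinear operator `A`, `λ ∈ σ(A)` (real-linear spectrum)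
iff `|λ|² ∈ σ(A²)` (complex-linear spectrum), where `A²` is complex linear. -/
theorem stmt3 {H : Type*} [NormedAddCommGroup H] [InnerProductSpace ℂ H] [CompleteSpace H]
    (A : H →L[ℝ] H)
    (hA : ∀ (c : ℂ) (x : H), A (c • x) = (starRingEnd ℂ c) • A x)
    (B : H →L[ℂ] H) (hB : ∀ x, B x = A (A x)) (l : ℂ) :
    ¬ IsUnit (l • (ContinuousLinearMap.id ℝ H) - A) ↔
      (((‖l‖ : ℝ) : ℂ) ^ 2) ∈ spectrum ℂ B := by
  rw [spectrum.mem_iff, ContinuousLinearMap.isUnit_iff_bijective,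
      ContinuousLinearMap.isUnit_iff_bijective, not_iff_not]
  set c : ℂ := ((‖l‖ : ℝ) : ℂ) ^ 2 with hc
  have habs : l * starRingEnd ℂ l = c := by
    rw [Complex.mul_conj, Complex.normSq_eq_norm_sq, hc]; push_cast; ring
  set F : H → H := fun x => l • x - A x with hF
  set G : H → H := fun x => (starRingEnd ℂ l) • x + A x with hG
  -- the operator in the statement acts as F
  have hMF : ⇑(l • (ContinuousLinearMap.id ℝ H) - A) = F := by
    funext x; simp [hF]
  -- the complex operator acts as x ↦ c • x - B x
  have hPB : ⇑((algebraMap ℂ (H →L[ℂ] H)) c - B) = fun x => c • x - B x := by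
    funext x
    simp [Algebra.algebraMap_eq_smul_one]
  have hfg : ∀ x, F (G x) = c • x - B x := by
    intro x
    simp only [hF, hG, smul_add, map_add, hA, smul_smul, hB]
    rw [Complex.conj_conj]
    rw [habs]
    abel
  have hgf : ∀ x, G (F x) = c • x - B x := by
    intro x
    simp only [hF, hG, smul_sub, map_sub, hA, smul_smul, hB]
    rw [mul_comm, habs]
    abel
  have hsmul : ∀ (μ : ℂ), μ ≠ 0 → Function.Bijective (fun x : H => μ • x) := by
    intro μ hμ
    refine ⟨smul_right_injective H hμ, fun y => ⟨μ⁻¹ • y, ?_⟩⟩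
    simp [smul_smul, mul_inv_cancel₀ hμ]
  rw [hMF, hPB]
  constructor
  · -- F bijective → c•x - Bx bijective
    intro hFb
    have hGb : Function.Bijective G := by
      by_cases hl : l = 0
      · have : G = fun x => -(F x) := by
          funext x; simp [hF, hG, hl]
        rw [this]
        exact neg_involutive.bijective.comp hFb
      · obtain ⟨ν, hν⟩ : ∃ ν : ℂ, ν ^ 2 = -((starRingEnd ℂ l) / l) :=
          IsAlgClosed.exists_pow_nat_eq _ (by norm_num)
        have hν0 : ν ≠ 0 := by
          intro h
          rw [h] at hν
          rw [zero_pow (by norm_num)] at hν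
          rw [eq_comm, neg_eq_zero, div_eq_zero_iff] at hν
          rcases hν with h' | h'
          · exact hl (by simpa using h')
          · exact hl h'
        have hνl : ν ^ 2 * l = -(starRingEnd ℂ l) := by
          rw [hν]; field_simp
        have hνabs : ν * starRingEnd ℂ ν = 1 := by
          have h1 : ‖ν‖ = 1 := by
            have h2 : ‖ν‖ ^ 2 = 1 := by
              rw [← norm_pow, hν]
              rw [norm_neg, norm_div, Complex.norm_conj]
              exact div_self (by simpa using hl)
            nlinarith [norm_nonneg ν]
          rw [Complex.mul_conj, Complex.normSq_eq_norm_sq, h1]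
          norm_num
        have key : G = fun x => -(ν • F (ν • x)) := by
          funext x
          simp only [hF, hG, smul_sub, smul_smul, hA]
          rw [show ν * (l * ν) = ν ^ 2 * l by ring, hνl, hνabs, one_smul, neg_smul]
          abel
        rw [key]
        have : (fun x => -(ν • F (ν • x))) =
            (fun y : H => -y) ∘ (fun y : H => ν • y) ∘ F ∘ (fun y : H => ν • y) := rfl
        rw [this]
        exact neg_involutive.bijective.comp ((hsmul ν hν0).comp (hFb.comp (hsmul ν hν0)))
    have : (fun x => c • x - B x) = F ∘ G := by
      funext x; exact (hfg x).symm
    rw [this]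
    exact hFb.comp hGb
  · -- c•x - Bx bijective → F bijective
    intro hPb
    constructor
    · intro x y hxy
      have h1 : G (F x) = G (F y) := by rw [hxy]
      rw [hgf, hgf] at h1
      exact hPb.injective h1
    · intro y
      obtain ⟨x, hx⟩ := hPb.surjective y
      exact ⟨G x, by rw [hfg]; exact hx⟩
end

section
/- Let A be a bounded antilinear operator on a complex Hilbert space and let f̂(λ) = u₁(|λ|²) + v₁(|λ|²)λ and ĝ(λ) = u₂(|λ|²) + v₂(|λ|²)λ with u₁, v₁, u₂, v₂ complex polynomials. If A x = λ x for x ∈ H, then f(A) g(A) x = ĥ(λ) x, where ĥ(λ) = u₁(|λ|²)u₂(|λ|²) + |λ|² v₁(|λ|²) conj(v₂(|λ|²)) + ( u₁(|λ|²) v₂(|λ|²) + conj(u₂(|λ|²)) v₁(|λ|²) ) λ. -/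
open Complex Polynomial

lemma aeval_eig {H : Type*} [NormedAddCommGroup H] [NormedSpace ℂ H]
    (B : H →L[ℂ] H) (x : H) (μ : ℂ) (h : B x = μ • x) (p : Polynomial ℂ) :
    (Polynomial.aeval B p) x = p.eval μ • x := by
  have hpow : ∀ n : ℕ, (B ^ n) x = μ ^ n • x := by
    intro n
    induction n with
    | zero => simp
    | succ n ih =>
      rw [pow_succ', ContinuousLinearMap.mul_apply, ih, map_smul, h, smul_smul,
        pow_succ, mul_comm]
  induction p using Polynomial.induction_on' with
  | add p q hp hq =>
    simp [map_add, ContinuousLinearMap.add_apply, hp, hq, add_smul]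
  | monomial n a =>
    rw [Polynomial.aeval_monomial, Algebra.algebraMap_eq_smul_one,
      ContinuousLinearMap.mul_apply, hpow, map_smul, ContinuousLinearMap.smul_apply,
      ContinuousLinearMap.one_apply, Polynomial.eval_monomial, smul_smul, mul_comm]

/-- The product formula in `C(r2)`: for an eigenvector `A x = λ x`,
`f(A) g(A) x = ĥ(λ) x` where `ĥ = f̂ * ĝ`. -/
theorem stmt5 {H : Type*} [NormedAddCommGroup H] [InnerProductSpace ℂ H] [CompleteSpace H]
    (A : H →L[ℝ] H)
    (hA : ∀ (c : ℂ) (x : H), A (c • x) = (starRingEnd ℂ c) • A x)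
    (B : H →L[ℂ] H) (hB : ∀ x, B x = A (A x))
    (u₁ v₁ u₂ v₂ : Polynomial ℂ) (x : H) (l : ℂ) (hx : A x = l • x) :
    (Polynomial.aeval B u₁) ((Polynomial.aeval B u₂) x + (Polynomial.aeval B v₂) (A x)) +
      (Polynomial.aeval B v₁)
        (A ((Polynomial.aeval B u₂) x + (Polynomial.aeval B v₂) (A x))) =
      (u₁.eval (((‖l‖ : ℝ) : ℂ) ^ 2) * u₂.eval (((‖l‖ : ℝ) : ℂ) ^ 2) +
        ((‖l‖ : ℝ) : ℂ) ^ 2 * v₁.eval (((‖l‖ : ℝ) : ℂ) ^ 2) *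
          (starRingEnd ℂ) (v₂.eval (((‖l‖ : ℝ) : ℂ) ^ 2)) +
        (u₁.eval (((‖l‖ : ℝ) : ℂ) ^ 2) * v₂.eval (((‖l‖ : ℝ) : ℂ) ^ 2) +
          (starRingEnd ℂ) (u₂.eval (((‖l‖ : ℝ) : ℂ) ^ 2)) *
            v₁.eval (((‖l‖ : ℝ) : ℂ) ^ 2)) * l) • x := by
  set μ : ℂ := ((‖l‖ : ℝ) : ℂ) ^ 2 with hμ
  have hll : l * (starRingEnd ℂ) l = μ := by
    rw [Complex.mul_conj, hμ, ← Complex.sq_norm]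
    push_cast
    ring
  have hBx : B x = μ • x := by
    rw [hB, hx, hA, hx, smul_smul, mul_comm, hll]
  have h1 : (Polynomial.aeval B u₂) x = u₂.eval μ • x := aeval_eig B x μ hBx u₂
  have h2 : (Polynomial.aeval B v₂) (A x) = (l * v₂.eval μ) • x := by
    rw [hx, map_smul, aeval_eig B x μ hBx v₂, smul_smul]
  have hsum : (Polynomial.aeval B u₂) x + (Polynomial.aeval B v₂) (A x)
      = (u₂.eval μ + l * v₂.eval μ) • x := by rw [h1, h2, add_smul]
  have hAsum : A ((Polynomial.aeval B u₂) x + (Polynomial.aeval B v₂) (A x))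
      = ((starRingEnd ℂ) (u₂.eval μ + l * v₂.eval μ) * l) • x := by
    rw [hsum, hA, hx, smul_smul]
  rw [hAsum, hsum, map_smul, map_smul, aeval_eig B x μ hBx u₁, aeval_eig B x μ hBx v₁,
    smul_smul, smul_smul, ← add_smul]
  congr 1
  simp only [map_add, map_mul, Complex.conj_conj]
  have hll' : (starRingEnd ℂ) l * l = μ := by rw [mul_comm]; exact hll
  linear_combination (v₁.eval μ * (starRingEnd ℂ) (v₂.eval μ)) * hll'
end

section
/- Let A be a bounded antilinear self-adjoint operator on a complex Hilbert space H (self-adjoint with respect to the real inner product Re⟨·,·⟩). Then for every polynomial p we have p̂(σ(A)) ⊆ σ(p(A)), where p̂(λ) = Σ_k (α_{2k} + α_{2k+1}λ)|λ|^{2k} for p(z) = Σ_j α_j z^j. -/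
open Complex

section Aux
variable {H : Type*} [NormedAddCommGroup H] [InnerProductSpace ℂ H]

lemma aux_smulmul (c : ℂ) (g h : H →L[ℝ] H) : (c • g) * h = c • (g * h) := by
  ext x; simp [ContinuousLinearMap.mul_apply]

lemma aux_evenpow (A : H →L[ℝ] H)
    (hA : ∀ (c : ℂ) (x : H), A (c • x) = (starRingEnd ℂ c) • A x)
    (k : ℕ) (c : ℂ) (x : H) : (A ^ (2 * k)) (c • x) = c • (A ^ (2 * k)) x := by
  induction k generalizing c x with
  | zero => simp
  | succ k ih =>
    have h2 : 2 * (k + 1) = 2 * k + 1 + 1 := by ring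
    rw [h2, pow_succ, pow_succ]
    simp only [ContinuousLinearMap.mul_apply]
    rw [hA, hA, ih]
    simp

lemma aux_evenpow' (A : H →L[ℝ] H)
    (hA : ∀ (c : ℂ) (x : H), A (c • x) = (starRingEnd ℂ c) • A x)
    (k : ℕ) (c : ℂ) (g : H →L[ℝ] H) :
    A ^ (2 * k) * (c • g) = c • (A ^ (2 * k) * g) := by
  ext x; simp [ContinuousLinearMap.mul_apply, aux_evenpow A hA]

lemma aux_fe (A : H →L[ℝ] H)
    (hA : ∀ (c : ℂ) (x : H), A (c • x) = (starRingEnd ℂ c) • A x) (l : ℂ) :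
    ((starRingEnd ℂ l) • (1 : H →L[ℝ] H) + A) * (l • 1 - A)
      = (l * starRingEnd ℂ l) • (1 : H →L[ℝ] H) - A ^ 2 := by
  ext x
  simp [ContinuousLinearMap.mul_apply, hA, pow_two]
  module

/-- left factorization, even powers -/
lemma aux_LE (A : H →L[ℝ] H)
    (hA : ∀ (c : ℂ) (x : H), A (c • x) = (starRingEnd ℂ c) • A x) (l : ℂ) (k : ℕ) :
    ∃ t : H →L[ℝ] H, (l * starRingEnd ℂ l) ^ k • (1 : H →L[ℝ] H) - A ^ (2 * k)
      = t * (l • 1 - A) := by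
  induction k with
  | zero => exact ⟨0, by simp⟩
  | succ k ih =>
    obtain ⟨t, ht⟩ := ih
    refine ⟨(l * starRingEnd ℂ l) • t
      + A ^ (2 * k) * ((starRingEnd ℂ l) • (1 : H →L[ℝ] H) + A), ?_⟩
    rw [add_mul, aux_smulmul, ← ht, mul_assoc, aux_fe A hA l, mul_sub,
      aux_evenpow' A hA k (l * starRingEnd ℂ l) 1, mul_one]
    have h2 : 2 * (k + 1) = 2 * k + 2 := by ring
    rw [h2, pow_add A (2*k) 2]
    module

/-- left factorization, odd powers -/
lemma aux_LO (A : H →L[ℝ] H)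
    (hA : ∀ (c : ℂ) (x : H), A (c • x) = (starRingEnd ℂ c) • A x) (l : ℂ) (k : ℕ) :
    ∃ t : H →L[ℝ] H, (l * (l * starRingEnd ℂ l) ^ k) • (1 : H →L[ℝ] H) - A ^ (2 * k + 1)
      = t * (l • 1 - A) := by
  obtain ⟨t, ht⟩ := aux_LE A hA l k
  refine ⟨l • t + A ^ (2 * k), ?_⟩
  rw [add_mul, aux_smulmul, ← ht, mul_sub, aux_evenpow' A hA k l 1, mul_one, pow_succ]
  module

lemma aux_double_sum {M : Type*} [AddCommMonoid M] (g : ℕ → M) (n : ℕ) :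
    ∑ k ∈ Finset.range (2 * n), g k
      = ∑ k ∈ Finset.range n, (g (2 * k) + g (2 * k + 1)) := by
  induction n with
  | zero => simp
  | succ n ih =>
    have h2 : 2 * (n + 1) = 2 * n + 1 + 1 := by ring
    rw [h2, Finset.sum_range_succ, Finset.sum_range_succ, ih, Finset.sum_range_succ, add_assoc]

lemma aux_abs_pow (l : ℂ) (k : ℕ) :
    ((‖l‖ : ℝ) : ℂ) ^ (2 * k) = (l * starRingEnd ℂ l) ^ k := by
  rw [pow_mul]
  congr 1
  rw [← Complex.ofReal_pow, Complex.sq_norm, Complex.mul_conj]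

/-- Factorization of `p̂(l) • 1 - p(A)` through `l • 1 - A` on the right. -/
lemma aux_key (A : H →L[ℝ] H)
    (hA : ∀ (c : ℂ) (x : H), A (c • x) = (starRingEnd ℂ c) • A x)
    (j : ℕ) (α : ℕ → ℂ) (hα : ∀ k, j < k → α k = 0) (l : ℂ) :
    ∃ t : H →L[ℝ] H,
      (∑ k ∈ Finset.range (j / 2 + 1),
        (α (2 * k) + α (2 * k + 1) * l) * ((‖l‖ : ℝ) : ℂ) ^ (2 * k)) •
          (1 : H →L[ℝ] H) - ∑ k ∈ Finset.range (j + 1), α k • A ^ k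
      = t * (l • 1 - A) := by
  set n := j / 2 + 1 with hn
  have hterm : ∀ k : ℕ, ∃ t : H →L[ℝ] H,
      ((α (2 * k) + α (2 * k + 1) * l) * (l * starRingEnd ℂ l) ^ k) • (1 : H →L[ℝ] H)
        - (α (2 * k) • A ^ (2 * k) + α (2 * k + 1) • A ^ (2 * k + 1))
      = t * (l • 1 - A) := by
    intro k
    obtain ⟨t1, h1⟩ := aux_LE A hA l k
    obtain ⟨t2, h2⟩ := aux_LO A hA l k
    refine ⟨α (2 * k) • t1 + α (2 * k + 1) • t2, ?_⟩
    rw [add_mul (α (2 * k) • t1) (α (2 * k + 1) • t2) (l • 1 - A),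
      aux_smulmul, aux_smulmul, ← h1, ← h2]
    module
  choose t ht using hterm
  refine ⟨∑ k ∈ Finset.range n, t k, ?_⟩
  have hsub : ∑ k ∈ Finset.range (j + 1), α k • A ^ k
      = ∑ k ∈ Finset.range (2 * n), α k • A ^ k := by
    refine Finset.sum_subset (Finset.range_subset_range.mpr (by omega)) ?_
    intro x hx hx'
    rw [hα x (by simp only [Finset.mem_range] at hx'; omega)]
    simp
  rw [hsub, aux_double_sum (fun k => α k • A ^ k) n, Finset.sum_smul,
    ← Finset.sum_sub_distrib, Finset.sum_mul]
  refine Finset.sum_congr rfl fun k _ => ?_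
  rw [aux_abs_pow l k, ht k]

end Aux

/-- Spectral mapping inclusion `p̂(σ(A)) ⊆ σ(p(A))` for a bounded
self-adjoint antilinear operator `A` and a polynomial `p`. -/
theorem stmt6 {H : Type*} [NormedAddCommGroup H] [InnerProductSpace ℂ H] [CompleteSpace H]
    (A : H →L[ℝ] H)
    (hA : ∀ (c : ℂ) (x : H), A (c • x) = (starRingEnd ℂ c) • A x)
    (hsa : ∀ x y : H, (inner ℂ (A x) y : ℂ).re = (inner ℂ x (A y) : ℂ).re)
    (j : ℕ) (α : ℕ → ℂ) (hα : ∀ k, j < k → α k = 0) (l : ℂ)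
    (hl : ¬ IsUnit (l • (ContinuousLinearMap.id ℝ H) - A)) :
    ¬ IsUnit ((∑ k ∈ Finset.range (j / 2 + 1),
        (α (2 * k) + α (2 * k + 1) * l) * ((‖l‖ : ℝ) : ℂ) ^ (2 * k)) •
          (ContinuousLinearMap.id ℝ H) -
        ∑ k ∈ Finset.range (j + 1), α k • A ^ k) := by
  rw [← ContinuousLinearMap.one_def] at hl ⊢
  set e : H →L[ℝ] H := l • 1 - A with he
  intro hP
  obtain ⟨t, ht⟩ := aux_key A hA j α hα l
  obtain ⟨u, hu⟩ := hP
  set s : H →L[ℝ] H := (↑u⁻¹ : H →L[ℝ] H) * t with hs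
  have hse : s * e = 1 := by
    rw [hs, mul_assoc, ← ht, ← hu, Units.inv_mul]
  have hsid : ∀ x : H, s (e x) = x := by
    intro x
    have := congrArg (fun g : H →L[ℝ] H => g x) hse
    simpa [ContinuousLinearMap.mul_apply] using this
  have hinj : ∀ x : H, e x = 0 → x = 0 := by
    intro x hx
    have := hsid x
    rw [hx, map_zero] at this
    exact this.symm
  apply hl
  -- `e` is injective
  have hker : LinearMap.ker (e : H →ₗ[ℝ] H) = ⊥ := LinearMap.ker_eq_bot'.mpr fun m hm => hinj m hm
  -- `e` has closed range
  have hal : AntilipschitzWith ‖s‖₊ e := by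
    refine ContinuousLinearMap.antilipschitz_of_bound e fun x => ?_
    calc ‖x‖ = ‖s (e x)‖ := by rw [hsid x]
      _ ≤ ‖s‖ * ‖e x‖ := s.le_opNorm (e x)
  have hclosed : IsClosed (Set.range e) := hal.isClosed_range e.uniformContinuous
  -- real inner product structure
  letI : InnerProductSpace ℝ H := InnerProductSpace.complexToReal
  set K : Submodule ℝ H := LinearMap.range (e : H →ₗ[ℝ] H) with hK
  have hKc : IsClosed (K : Set H) := by
    have : (K : Set H) = Set.range e := LinearMap.coe_range _
    rw [this]; exact hclosed
  -- the orthogonal complement of the range is trivial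
  have hKbot : Kᗮ = ⊥ := by
    rw [Submodule.eq_bot_iff]
    intro y hy
    have hy' : ∀ x : H, (inner ℂ (e x) y : ℂ).re = 0 := by
      intro x
      exact hy (e x) (LinearMap.mem_range_self _ x)
    have hz : ∀ x : H, (inner ℂ x ((starRingEnd ℂ l) • y - A y) : ℂ).re = 0 := by
      intro x
      have h0 := hy' x
      rw [he] at h0
      simp only [ContinuousLinearMap.sub_apply, ContinuousLinearMap.smul_apply,
        ContinuousLinearMap.one_apply, inner_sub_left, inner_smul_left, Complex.sub_re] at h0
      rw [inner_sub_right, inner_smul_right, Complex.sub_re]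
      rw [hsa x y] at h0
      linarith [h0]
    have hAy : A y = (starRingEnd ℂ l) • y := by
      have h1 := hz ((starRingEnd ℂ l) • y - A y)
      have h3 : (inner ℂ ((starRingEnd ℂ l) • y - A y) ((starRingEnd ℂ l) • y - A y) : ℂ)
          = (‖(starRingEnd ℂ l) • y - A y‖ : ℂ) ^ 2 := inner_self_eq_norm_sq_to_K _
      rw [h3] at h1
      simp only [← Complex.ofReal_pow, Complex.ofReal_re] at h1
      have h4 := pow_eq_zero_iff (n := 2) (by norm_num) |>.mp h1
      have h5 : ((starRingEnd ℂ l) • y - A y : H) = 0 := norm_eq_zero.mp h4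
      exact (sub_eq_zero.mp h5).symm
    by_cases hl0 : l = 0
    · apply hinj y
      rw [he]
      simp [hl0, hAy]
    · have h2 : e ((starRingEnd ℂ l) • y) = 0 := by
        rw [he]
        simp only [ContinuousLinearMap.sub_apply, ContinuousLinearMap.smul_apply,
          ContinuousLinearMap.one_apply]
        rw [hA, hAy]
        simp [smul_smul, mul_comm]
      have h3 := hinj _ h2
      have h4 : (starRingEnd ℂ l) ≠ 0 := by simpa using hl0
      rcases smul_eq_zero.mp h3 with h | h
      · exact absurd h h4
      · exact h
  -- hence the (closed) range is everything
  haveI : CompleteSpace K := hKc.completeSpace_coe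
  have hrange : LinearMap.range (e : H →ₗ[ℝ] H) = ⊤ := Submodule.orthogonal_eq_bot_iff.mp hKbot
  let eqv := ContinuousLinearEquiv.ofBijective e hker hrange
  have hco : ⇑eqv = ⇑e := ContinuousLinearEquiv.coeFn_ofBijective e hker hrange
  refine isUnit_iff_exists.mpr ⟨(eqv.symm : H →L[ℝ] H), ?_, ?_⟩
  · ext x
    simp only [ContinuousLinearMap.mul_apply, ContinuousLinearMap.one_apply,
      ContinuousLinearEquiv.coe_coe]
    rw [← hco]
    exact eqv.apply_symm_apply x
  · ext x
    simp only [ContinuousLinearMap.mul_apply, ContinuousLinearMap.one_apply,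
      ContinuousLinearEquiv.coe_coe]
    rw [← hco]
    exact eqv.symm_apply_apply x
end

section
/- Let A be a bounded antilinear self-adjoint operator on a complex Hilbert space H, and let x, y ∈ H. If y is orthogonal to K(A;x) := closure of span{p(A)x : p polynomial} (with respect to the complex inner product), then K(A;y) is orthogonal to K(A;x). -/
open Complex

/-- If `y ⟂ K(A;x)` then `K(A;y) ⟂ K(A;x)` for a bounded self-adjoint
antilinear operator `A`, where `K(A;z)` is the closure of `{p(A)z : p polynomial}`. -/
theorem stmt7 {H : Type*} [NormedAddCommGroup H] [InnerProductSpace ℂ H] [CompleteSpace H]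
    (A : H →L[ℝ] H)
    (hA : ∀ (c : ℂ) (x : H), A (c • x) = (starRingEnd ℂ c) • A x)
    (hsa : ∀ x y : H, (inner ℂ (A x) y : ℂ).re = (inner ℂ x (A y) : ℂ).re)
    (x y : H)
    (hy : ∀ w ∈ closure {w : H | ∃ (n : ℕ) (α : ℕ → ℂ),
        w = ∑ k ∈ Finset.range n, α k • (A ^ k) x}, (inner ℂ y w : ℂ) = 0) :
    ∀ u ∈ closure {w : H | ∃ (n : ℕ) (α : ℕ → ℂ),
        w = ∑ k ∈ Finset.range n, α k • (A ^ k) y},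
      ∀ w ∈ closure {w : H | ∃ (n : ℕ) (α : ℕ → ℂ),
        w = ∑ k ∈ Finset.range n, α k • (A ^ k) x}, (inner ℂ u w : ℂ) = 0 := by
  intro u hu w hw
  set Sx : Set H := {w : H | ∃ (n : ℕ) (α : ℕ → ℂ),
      w = ∑ k ∈ Finset.range n, α k • (A ^ k) x} with hSx
  set Sy : Set H := {w : H | ∃ (n : ℕ) (α : ℕ → ℂ),
      w = ∑ k ∈ Finset.range n, α k • (A ^ k) y} with hSy
  -- full adjoint identity
  have key : ∀ z v : H, (inner ℂ (A z) v : ℂ) = (starRingEnd ℂ) (inner ℂ z (A v)) := by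
    intro z v
    apply Complex.ext
    · simpa only [Complex.conj_re] using hsa z v
    · have h := hsa z (Complex.I • v)
      rw [hA, inner_smul_right, inner_smul_right] at h
      simp only [Complex.mul_re, Complex.I_re, Complex.I_im, Complex.conj_I,
        Complex.neg_re, Complex.neg_im] at h ⊢
      simp only [Complex.conj_im]
      linarith
  -- A maps Sx into itself
  have hmap : Set.MapsTo A Sx Sx := by
    rintro _ ⟨n, α, rfl⟩
    refine ⟨n + 1, fun k => if k = 0 then 0 else (starRingEnd ℂ) (α (k - 1)), ?_⟩
    rw [map_sum, Finset.sum_range_succ']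
    simp only [Nat.succ_ne_zero, if_false, Nat.add_sub_cancel, reduceIte, zero_smul, add_zero]
    refine Finset.sum_congr rfl fun k _ => ?_
    rw [hA, pow_succ']
    rfl
  have hmapc : Set.MapsTo A (closure Sx) (closure Sx) := hmap.closure A.continuous
  -- orthogonality propagates through powers of A applied to y
  have horth : ∀ k : ℕ, ∀ v ∈ closure Sx, (inner ℂ ((A ^ k) y) v : ℂ) = 0 := by
    intro k
    induction k with
    | zero => simpa using hy
    | succ k ih =>
      intro v hv
      have : (A ^ (k + 1)) y = A ((A ^ k) y) := by
        rw [pow_succ']; rfl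
      rw [this, key]
      rw [ih (A v) (hmapc hv)]
      simp
  -- now conclude for u in the closure
  have hclosed : IsClosed {u : H | (inner ℂ u w : ℂ) = 0} :=
    isClosed_eq (Continuous.inner continuous_id continuous_const) continuous_const
  have hsub : Sy ⊆ {u : H | (inner ℂ u w : ℂ) = 0} := by
    rintro _ ⟨n, α, rfl⟩
    simp only [Set.mem_setOf_eq, sum_inner, inner_smul_left]
    refine Finset.sum_eq_zero fun k _ => ?_
    rw [horth k w hw, mul_zero]
  exact closure_minimal hsub hclosed hu
end

section
/- Let p ∈ P_d(r2) be nonzero, writing p(λ) = u(|λ|²) + v(|λ|²)λ with polynomials u, v. Let m be the number of radii r > 0 such that all points of modulus r are zeroes of p, and let s be the number of radii r ≥ 0 for which exactly one point of modulus r is a zero of p. Then 2m + s ≤ d. -/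
open Complex Polynomial

private lemma conj_eval' (P : Polynomial ℂ) (x : ℂ) :
    (P.map (starRingEnd ℂ)).eval x = starRingEnd ℂ (P.eval (starRingEnd ℂ x)) := by
  conv_lhs => rw [show x = starRingEnd ℂ (starRingEnd ℂ x) from (Complex.conj_conj x).symm]
  rw [Polynomial.eval_map, Polynomial.eval₂_at_apply]

/-- For nonzero `p ∈ P_d(r2)`, if `m` is the number of radii `r > 0` whose
whole circle consists of zeroes of `p`, and `s` the number of radii `r ≥ 0` carrying
exactly one zero, then `2m + s ≤ d`. -/
theorem stmt10 (d : ℕ) (α : ℕ → ℂ) (p : ℂ → ℂ)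
    (hp : p = fun z => ∑ k ∈ Finset.range (d / 2 + 1),
      (α (2 * k) + α (2 * k + 1) * z) * ((‖z‖ : ℝ) : ℂ) ^ (2 * k))
    (hd : d % 2 = 0 → α (d + 1) = 0)
    (hpne : ∃ z, p z ≠ 0) :
    ({r : ℝ | 0 < r ∧ ∀ l : ℂ, ‖l‖ = r → p l = 0}).Finite ∧
    ({r : ℝ | 0 ≤ r ∧ ∃! l : ℂ, ‖l‖ = r ∧ p l = 0}).Finite ∧
    2 * ({r : ℝ | 0 < r ∧ ∀ l : ℂ, ‖l‖ = r → p l = 0}).ncard +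
      ({r : ℝ | 0 ≤ r ∧ ∃! l : ℂ, ‖l‖ = r ∧ p l = 0}).ncard ≤ d := by
  classical
  set Mset := {r : ℝ | 0 < r ∧ ∀ l : ℂ, ‖l‖ = r → p l = 0} with hMset
  set Sset := {r : ℝ | 0 ≤ r ∧ ∃! l : ℂ, ‖l‖ = r ∧ p l = 0} with hSset
  set U : Polynomial ℂ := ∑ k ∈ Finset.range (d/2+1), C (α (2*k)) * X ^ k with hU
  set V : Polynomial ℂ := ∑ k ∈ Finset.range (d/2+1), C (α (2*k+1)) * X ^ k with hV
  set F : Polynomial ℂ := U * U.map (starRingEnd ℂ) - X * (V * V.map (starRingEnd ℂ)) with hF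
  have hUeval : ∀ x : ℂ, U.eval x = ∑ k ∈ Finset.range (d/2+1), α (2*k) * x ^ k := by
    intro x; simp [hU, Polynomial.eval_finset_sum]
  have hVeval : ∀ x : ℂ, V.eval x = ∑ k ∈ Finset.range (d/2+1), α (2*k+1) * x ^ k := by
    intro x; simp [hV, Polynomial.eval_finset_sum]
  have key : ∀ z : ℂ, p z = U.eval (((‖z‖ : ℝ) : ℂ)^2)
      + V.eval (((‖z‖ : ℝ) : ℂ)^2) * z := by
    intro z
    rw [hp, hUeval, hVeval, Finset.sum_mul, ← Finset.sum_add_distrib]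
    apply Finset.sum_congr rfl
    intro k _
    rw [← pow_mul]
    ring
  have hconjsq : ∀ r : ℝ, starRingEnd ℂ ((r:ℂ)^2) = (r:ℂ)^2 := by
    intro r; rw [map_pow, Complex.conj_ofReal]
  -- Lemma A
  have lemA : ∀ (r : ℝ) (l : ℂ), ‖l‖ = r → p l = 0 → F.eval ((r:ℂ)^2) = 0 := by
    intro r l hl hpl
    subst hl
    rw [key] at hpl
    set a : ℂ := ((‖l‖ : ℝ):ℂ)^2 with ha
    have hll : l * starRingEnd ℂ l = a := by
      rw [Complex.mul_conj, ha]
      rw [Complex.normSq_eq_norm_sq]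
      push_cast
      ring
    rw [hF]
    simp only [Polynomial.eval_sub, Polynomial.eval_mul, Polynomial.eval_X]
    rw [conj_eval', conj_eval', hconjsq]
    set u := U.eval a
    set v := V.eval a
    have hu : u = -(v * l) := by linear_combination hpl
    rw [hu]
    simp only [map_neg, map_mul]
    linear_combination (v * starRingEnd ℂ v) * hll
  -- Lemma B
  have lemB : ∀ r : ℝ, 0 < r → (∀ l : ℂ, ‖l‖ = r → p l = 0) →
      U.eval ((r:ℂ)^2) = 0 ∧ V.eval ((r:ℂ)^2) = 0 := by
    intro r hr hall
    have habs1 : ‖((r:ℂ))‖ = r := by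
      rw [Complex.norm_real, Real.norm_eq_abs, abs_of_pos hr]
    have habs2 : ‖(-(r:ℂ))‖ = r := by
      rw [norm_neg, Complex.norm_real, Real.norm_eq_abs, abs_of_pos hr]
    have h1 := hall _ habs1
    have h2 := hall _ habs2
    rw [key, habs1] at h1
    rw [key, habs2] at h2
    have hrC : (r:ℂ) ≠ 0 := by exact_mod_cast hr.ne'
    have hv : V.eval ((r:ℂ)^2) = 0 := by
      have h3 : V.eval ((r:ℂ)^2) * (2*(r:ℂ)) = 0 := by linear_combination h1 - h2
      rcases mul_eq_zero.mp h3 with h | h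
      · exact h
      · exact absurd h (by simpa using hrC)
    refine ⟨?_, hv⟩
    rw [hv] at h1
    simpa using h1
  -- F ≠ 0
  have hF0 : F ≠ 0 := by
    intro h0
    have heval : ∀ t : ℝ, t < 0 → U.IsRoot (t:ℂ) ∧ V.IsRoot (t:ℂ) := by
      intro t ht
      have hFt : F.eval (t:ℂ) = 0 := by rw [h0, Polynomial.eval_zero]
      rw [hF] at hFt
      simp only [Polynomial.eval_sub, Polynomial.eval_mul, Polynomial.eval_X] at hFt
      rw [conj_eval', conj_eval', Complex.conj_ofReal, Complex.mul_conj, Complex.mul_conj] at hFt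
      have hre : (Complex.normSq (U.eval (t:ℂ))) - t * Complex.normSq (V.eval (t:ℂ)) = 0 := by
        have := congrArg Complex.re hFt
        simpa using this
      have hU0 : Complex.normSq (U.eval (t:ℂ)) = 0 := by
        nlinarith [Complex.normSq_nonneg (U.eval (t:ℂ)), Complex.normSq_nonneg (V.eval (t:ℂ))]
      have hV0 : Complex.normSq (V.eval (t:ℂ)) = 0 := by
        nlinarith [Complex.normSq_nonneg (V.eval (t:ℂ))]
      exact ⟨Complex.normSq_eq_zero.mp hU0, Complex.normSq_eq_zero.mp hV0⟩
    have hinf : ((fun t : ℝ => (t:ℂ)) '' Set.Iio 0).Infinite :=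
      (Set.Iio_infinite 0).image (Complex.ofReal_injective.injOn)
    have hUz : U = 0 := by
      apply Polynomial.eq_zero_of_infinite_isRoot
      apply hinf.mono
      rintro _ ⟨t, ht, rfl⟩
      exact (heval t ht).1
    have hVz : V = 0 := by
      apply Polynomial.eq_zero_of_infinite_isRoot
      apply hinf.mono
      rintro _ ⟨t, ht, rfl⟩
      exact (heval t ht).2
    obtain ⟨z, hz⟩ := hpne
    apply hz
    rw [key, hUz, hVz]
    simp
  -- degree bounds
  have hUdeg : U.degree ≤ ((d/2 : ℕ) : WithBot ℕ) := by
    refine (Polynomial.degree_sum_le _ _).trans (Finset.sup_le ?_)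
    intro k hk
    exact (Polynomial.degree_C_mul_X_pow_le _ _).trans
      (Nat.cast_le.mpr (Nat.lt_succ_iff.mp (Finset.mem_range.mp hk)))
  have hUUdeg : (U * U.map (starRingEnd ℂ)).degree ≤ (d : WithBot ℕ) := by
    refine (Polynomial.degree_mul_le _ _).trans ?_
    have h2 : (U.map (starRingEnd ℂ)).degree ≤ ((d/2 : ℕ) : WithBot ℕ) :=
      (Polynomial.degree_map_le).trans hUdeg
    calc U.degree + (U.map (starRingEnd ℂ)).degree ≤ ((d/2:ℕ) : WithBot ℕ) + ((d/2:ℕ) : WithBot ℕ) :=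
          add_le_add hUdeg h2
      _ = ((d/2 + d/2 : ℕ) : WithBot ℕ) := by push_cast; ring
      _ ≤ (d : WithBot ℕ) := Nat.cast_le.mpr (by omega)
  have hXVVdeg : (X * (V * V.map (starRingEnd ℂ))).degree ≤ (d : WithBot ℕ) := by
    rcases Nat.even_or_odd d with hev | hod
    · -- d even
      have hev' : d % 2 = 0 := Nat.even_iff.mp hev
      have hVeq : V = ∑ k ∈ Finset.range (d/2), C (α (2*k+1)) * X ^ k := by
        rw [hV, Finset.sum_range_succ, show 2*(d/2)+1 = d+1 by omega, hd hev', Polynomial.C_0,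
          zero_mul, add_zero]
      rcases Nat.eq_zero_or_pos d with h0 | hpos
      · subst h0
        simp only [Nat.zero_div, Finset.range_zero, Finset.sum_empty] at hVeq
        rw [hVeq]
        simp
      · have hVdeg : V.degree ≤ ((d/2 - 1 : ℕ) : WithBot ℕ) := by
          rw [hVeq]
          refine (Polynomial.degree_sum_le _ _).trans (Finset.sup_le ?_)
          intro k hk
          exact (Polynomial.degree_C_mul_X_pow_le _ _).trans
            (Nat.cast_le.mpr (by have := Finset.mem_range.mp hk; omega))
        have hVdeg' : (V.map (starRingEnd ℂ)).degree ≤ ((d/2 - 1 : ℕ) : WithBot ℕ) :=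
          (Polynomial.degree_map_le).trans hVdeg
        refine (Polynomial.degree_mul_le _ _).trans ?_
        calc X.degree + (V * V.map (starRingEnd ℂ)).degree
            ≤ 1 + (V.degree + (V.map (starRingEnd ℂ)).degree) :=
              add_le_add Polynomial.degree_X_le (Polynomial.degree_mul_le _ _)
          _ ≤ 1 + (((d/2 - 1 : ℕ) : WithBot ℕ) + ((d/2 - 1 : ℕ) : WithBot ℕ)) :=
              add_le_add le_rfl (add_le_add hVdeg hVdeg')
          _ = ((1 + (d/2 - 1) + (d/2 - 1) : ℕ) : WithBot ℕ) := by push_cast; ring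
          _ ≤ (d : WithBot ℕ) := Nat.cast_le.mpr (by omega)
    · -- d odd
      have hVdeg : V.degree ≤ ((d/2 : ℕ) : WithBot ℕ) := by
        rw [hV]
        refine (Polynomial.degree_sum_le _ _).trans (Finset.sup_le ?_)
        intro k hk
        exact (Polynomial.degree_C_mul_X_pow_le _ _).trans
          (Nat.cast_le.mpr (Nat.lt_succ_iff.mp (Finset.mem_range.mp hk)))
      have hVdeg' : (V.map (starRingEnd ℂ)).degree ≤ ((d/2 : ℕ) : WithBot ℕ) :=
        (Polynomial.degree_map_le).trans hVdeg
      refine (Polynomial.degree_mul_le _ _).trans ?_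
      calc X.degree + (V * V.map (starRingEnd ℂ)).degree
          ≤ 1 + (V.degree + (V.map (starRingEnd ℂ)).degree) :=
            add_le_add Polynomial.degree_X_le (Polynomial.degree_mul_le _ _)
        _ ≤ 1 + (((d/2 : ℕ) : WithBot ℕ) + ((d/2 : ℕ) : WithBot ℕ)) :=
            add_le_add le_rfl (add_le_add hVdeg hVdeg')
        _ = ((1 + d/2 + d/2 : ℕ) : WithBot ℕ) := by push_cast; ring
        _ ≤ (d : WithBot ℕ) := Nat.cast_le.mpr (by have := Nat.odd_iff.mp hod; omega)
  have hFdeg : F.natDegree ≤ d := by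
    apply Polynomial.natDegree_le_iff_degree_le.mpr
    rw [hF]
    exact (Polynomial.degree_sub_le _ _).trans (max_le hUUdeg hXVVdeg)
  -- roots facts
  have hMdvd : ∀ r ∈ Mset, (X - C ((r:ℂ)^2))^2 ∣ F := by
    intro r hr
    obtain ⟨hu, hv⟩ := lemB r hr.1 hr.2
    have dU : (X - C ((r:ℂ)^2)) ∣ U := Polynomial.dvd_iff_isRoot.mpr hu
    have dU' : (X - C ((r:ℂ)^2)) ∣ U.map (starRingEnd ℂ) := by
      apply Polynomial.dvd_iff_isRoot.mpr
      rw [Polynomial.IsRoot, conj_eval', hconjsq, hu, map_zero]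
    have dV : (X - C ((r:ℂ)^2)) ∣ V := Polynomial.dvd_iff_isRoot.mpr hv
    have dV' : (X - C ((r:ℂ)^2)) ∣ V.map (starRingEnd ℂ) := by
      apply Polynomial.dvd_iff_isRoot.mpr
      rw [Polynomial.IsRoot, conj_eval', hconjsq, hv, map_zero]
    rw [hF]
    apply dvd_sub
    · rw [sq]; exact mul_dvd_mul dU dU'
    · exact Dvd.dvd.mul_left (by rw [sq]; exact mul_dvd_mul dV dV') X
  have hSroot : ∀ r ∈ Sset, F.IsRoot ((r:ℂ)^2) := by
    intro r hr
    obtain ⟨l, ⟨hl, hpl⟩, _⟩ := hr.2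
    exact lemA r l hl hpl
  have hMroot : ∀ r ∈ Mset, F.IsRoot ((r:ℂ)^2) := by
    intro r hr
    have := hMdvd r hr
    have h1 : (X - C ((r:ℂ)^2)) ∣ F := dvd_trans (dvd_pow_self _ two_ne_zero) this
    exact Polynomial.dvd_iff_isRoot.mp h1
  -- injectivity
  have hinj : Set.InjOn (fun r : ℝ => ((r:ℂ)^2)) {r : ℝ | 0 ≤ r} := by
    intro a ha b hb hab
    simp only at hab
    have h2 : (a:ℝ)^2 = b^2 := by exact_mod_cast hab
    calc a = Real.sqrt (a^2) := (Real.sqrt_sq ha).symm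
      _ = Real.sqrt (b^2) := by rw [h2]
      _ = b := Real.sqrt_sq hb
  have hMsub : Mset ⊆ {r : ℝ | 0 ≤ r} := fun r hr => le_of_lt hr.1
  have hSsub : Sset ⊆ {r : ℝ | 0 ≤ r} := fun r hr => hr.1
  -- finiteness
  have hMfin : Mset.Finite := by
    apply Set.Finite.of_finite_image _ (hinj.mono hMsub)
    apply Set.Finite.subset (F.roots.toFinset.finite_toSet)
    rintro _ ⟨r, hr, rfl⟩
    simp only [Finset.coe_sort_coe, Multiset.mem_toFinset, Finset.mem_coe]
    exact Polynomial.mem_roots'.mpr ⟨hF0, hMroot r hr⟩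
  have hSfin : Sset.Finite := by
    apply Set.Finite.of_finite_image _ (hinj.mono hSsub)
    apply Set.Finite.subset (F.roots.toFinset.finite_toSet)
    rintro _ ⟨r, hr, rfl⟩
    simp only [Finset.coe_sort_coe, Multiset.mem_toFinset, Finset.mem_coe]
    exact Polynomial.mem_roots'.mpr ⟨hF0, hSroot r hr⟩
  refine ⟨hMfin, hSfin, ?_⟩
  -- counting
  set f : ℝ → ℂ := fun r => ((r:ℂ)^2) with hf
  set MF : Finset ℝ := hMfin.toFinset with hMF
  set SF : Finset ℝ := hSfin.toFinset with hSF
  set M' : Finset ℂ := MF.image f with hM'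
  set S' : Finset ℂ := SF.image f with hS'
  have hMFmem : ∀ r, r ∈ MF ↔ r ∈ Mset := fun r => Set.Finite.mem_toFinset _
  have hSFmem : ∀ r, r ∈ SF ↔ r ∈ Sset := fun r => Set.Finite.mem_toFinset _
  have hdisj : ∀ a, a ∈ M' → a ∉ S' := by
    intro a haM haS
    obtain ⟨r, hrM, rfl⟩ := Finset.mem_image.mp haM
    obtain ⟨r', hr'S, heq⟩ := Finset.mem_image.mp haS
    have hr : r ∈ Mset := (hMFmem r).mp hrM
    have hr' : r' ∈ Sset := (hSFmem r').mp hr'S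
    have hrr : r' = r := hinj (hSsub hr') (hMsub hr) heq
    subst hrr
    obtain ⟨hrpos, hall⟩ := hr
    obtain ⟨hrnn, l, hl, huniq⟩ := hr'
    have habs1 : ‖((r':ℂ))‖ = r' := by
      rw [Complex.norm_real, Real.norm_eq_abs, abs_of_pos hrpos]
    have habs2 : ‖(-(r':ℂ))‖ = r' := by
      rw [norm_neg, Complex.norm_real, Real.norm_eq_abs, abs_of_pos hrpos]
    have e1 := huniq (r':ℂ) ⟨habs1, hall _ habs1⟩
    have e2 := huniq (-(r':ℂ)) ⟨habs2, hall _ habs2⟩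
    rw [← e1] at e2
    have : (r':ℂ) = 0 := by linear_combination -e2 / 2
    have : r' = 0 := by exact_mod_cast this
    exact hrpos.ne' this
  have hroots : (2 • M'.val + S'.val) ≤ F.roots := by
    rw [Multiset.le_iff_count]
    intro a
    rw [Multiset.count_add, Multiset.count_nsmul, Polynomial.count_roots]
    by_cases haM : a ∈ M'
    · have haS : a ∉ S' := hdisj a haM
      rw [Multiset.count_eq_one_of_mem M'.nodup haM,
        Multiset.count_eq_zero_of_notMem (fun h => haS h)]
      obtain ⟨r, hrM, rfl⟩ := Finset.mem_image.mp haM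
      have hdvd := hMdvd r ((hMFmem r).mp hrM)
      have h2 : 2 ≤ Polynomial.rootMultiplicity ((r:ℂ)^2) F :=
        (Polynomial.le_rootMultiplicity_iff hF0).mpr hdvd
      simpa [hf] using h2
    · rw [Multiset.count_eq_zero_of_notMem (fun h => haM h)]
      by_cases haS : a ∈ S'
      · rw [Multiset.count_eq_one_of_mem S'.nodup haS]
        obtain ⟨r, hrS, rfl⟩ := Finset.mem_image.mp haS
        have hroot := hSroot r ((hSFmem r).mp hrS)
        have h2 : 1 ≤ Polynomial.rootMultiplicity ((r:ℂ)^2) F :=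
          (Polynomial.rootMultiplicity_pos hF0).mpr hroot
        simpa [hf] using h2
      · rw [Multiset.count_eq_zero_of_notMem (fun h => haS h)]
        simp
  have hcard : 2 * M'.card + S'.card ≤ d := by
    have h1 := Multiset.card_le_card hroots
    rw [Multiset.card_add, Multiset.card_nsmul] at h1
    have h2 : Multiset.card F.roots ≤ F.natDegree := F.card_roots'
    have hMc : Multiset.card M'.val = M'.card := rfl
    have hSc : Multiset.card S'.val = S'.card := rfl
    rw [hMc, hSc] at h1
    omega
  have hMcard : Mset.ncard = M'.card := by
    rw [Set.ncard_eq_toFinset_card _ hMfin, hM']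
    rw [Finset.card_image_of_injOn]
    intro a ha b hb hab
    exact hinj (hMsub ((hMFmem a).mp ha)) (hMsub ((hMFmem b).mp hb)) hab
  have hScard : Sset.ncard = S'.card := by
    rw [Set.ncard_eq_toFinset_card _ hSfin, hS']
    rw [Finset.card_image_of_injOn]
    intro a ha b hb hab
    exact hinj (hSsub ((hSFmem a).mp ha)) (hSsub ((hSFmem b).mp hb)) hab
  rw [hMcard, hScard]
  exact hcard
end

section
/- Let λ₁, …, λ_n ∈ ℂ be distinct points such that every origin-centred circle contains at most two of them, let ρ₁, …, ρ_n > 0, and define the inner product ⟨p, q⟩ = Σ_{k=1}^n p(λ_k) conj(q(λ_k)) ρ_k on the space P_{n−1}(r2). Then this inner product is positive definite, i.e., ⟨p, p⟩ > 0 for every nonzero p ∈ P_{n−1}(r2); equivalently, no nonzero element of P_{n−1}(r2) vanishes at all of λ₁, …, λ_n. -/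
open Complex

open Polynomial in
private lemma stmt11_degsum (f : ℕ → ℂ) (m : ℕ) :
    (∑ k ∈ Finset.range m, C (f k) * X ^ k).degree ≤ ((m - 1 : ℕ) : WithBot ℕ) := by
  refine (Polynomial.degree_sum_le _ _).trans (Finset.sup_le fun k hk => ?_)
  refine (Polynomial.degree_C_mul_X_pow_le _ _).trans ?_
  exact_mod_cast Nat.le_sub_one_of_lt (Finset.mem_range.mp hk)

private lemma stmt11_mapconj_eval (P : Polynomial ℂ) (x : ℝ) :
    (P.map (starRingEnd ℂ)).eval ((x : ℝ) : ℂ) = starRingEnd ℂ (P.eval ((x : ℝ) : ℂ)) := by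
  rw [Polynomial.eval_map]
  have h := Polynomial.eval₂_hom (p := P) (starRingEnd ℂ) ((x : ℝ) : ℂ)
  rwa [Complex.conj_ofReal] at h

open Polynomial in
private lemma stmt11_rep (d : ℕ) (α : ℕ → ℂ) (z : ℂ) :
    (∑ k ∈ Finset.range (d + 1),
      (α (2 * k) + α (2 * k + 1) * z) * ((‖z‖ : ℝ) : ℂ) ^ (2 * k))
    = (∑ k ∈ Finset.range (d + 1), C (α (2 * k)) * X ^ k).eval ((Complex.normSq z : ℝ) : ℂ)
      + z * (∑ k ∈ Finset.range (d + 1), C (α (2 * k + 1)) * X ^ k).eval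
          ((Complex.normSq z : ℝ) : ℂ) := by
  have habs : ∀ k : ℕ, ((‖z‖ : ℝ) : ℂ) ^ (2 * k) = ((Complex.normSq z : ℝ) : ℂ) ^ k := by
    intro k
    rw [pow_mul]
    norm_cast
    rw [Complex.sq_norm]
  simp only [Polynomial.eval_finset_sum, Polynomial.eval_mul, Polynomial.eval_pow,
    Polynomial.eval_C, Polynomial.eval_X, Finset.mul_sum, ← Finset.sum_add_distrib]
  refine Finset.sum_congr rfl fun k _ => ?_
  rw [habs k]; ring

open Polynomial in
private lemma stmt11_deg2 {P Q : Polynomial ℂ} {a b c : ℕ}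
    (hP : P.degree ≤ (a : WithBot ℕ)) (hQ : Q.degree ≤ (b : WithBot ℕ))
    (h : a + b ≤ c) : (P * Q).degree ≤ (c : WithBot ℕ) := by
  refine (degree_mul_le _ _).trans ((add_le_add hP hQ).trans ?_)
  rw [← Nat.cast_add]
  exact_mod_cast h

open Polynomial in
private lemma stmt11_deg3 {P Q : Polynomial ℂ} {a b c : ℕ}
    (hP : P.degree ≤ (a : WithBot ℕ)) (hQ : Q.degree ≤ (b : WithBot ℕ))
    (h : 1 + (a + b) ≤ c) : (X * (P * Q)).degree ≤ (c : WithBot ℕ) := by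
  refine (degree_mul_le _ _).trans ?_
  refine (add_le_add degree_X_le ((degree_mul_le _ _).trans (add_le_add hP hQ))).trans ?_
  rw [show (1 : WithBot ℕ) = ((1 : ℕ) : WithBot ℕ) from rfl, ← Nat.cast_add, ← Nat.cast_add]
  exact_mod_cast h

/-- The `L²` inner product determined by a biradial measure with `n`-point
support is positive definite on `P_{n-1}(r2)`. -/
theorem stmt11 (n : ℕ) (hn : 0 < n) (l : Fin n → ℂ) (hinj : Function.Injective l)
    (hbir : ∀ r : ℝ, Set.ncard {k : Fin n | ‖l k‖ = r} ≤ 2)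
    (ρ : Fin n → ℝ) (hρ : ∀ k, 0 < ρ k)
    (α : ℕ → ℂ) (hα : n % 2 = 1 → α n = 0)
    (p : ℂ → ℂ)
    (hp : p = fun z => ∑ k ∈ Finset.range ((n - 1) / 2 + 1),
      (α (2 * k) + α (2 * k + 1) * z) * ((‖z‖ : ℝ) : ℂ) ^ (2 * k))
    (hpne : ∃ z, p z ≠ 0) :
    0 < ∑ k, ρ k * ‖p (l k)‖ ^ 2 := by
  classical
  set d := (n - 1) / 2 with hd
  set A : Polynomial ℂ :=
    ∑ k ∈ Finset.range (d + 1), Polynomial.C (α (2 * k)) * Polynomial.X ^ k with hA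
  set B : Polynomial ℂ :=
    ∑ k ∈ Finset.range (d + 1), Polynomial.C (α (2 * k + 1)) * Polynomial.X ^ k with hB
  have hrep : ∀ z : ℂ,
      p z = A.eval ((Complex.normSq z : ℝ) : ℂ) + z * B.eval ((Complex.normSq z : ℝ) : ℂ) := by
    intro z
    simp only [hp]
    rw [hA, hB]
    exact stmt11_rep d α z
  have key : ∃ k, p (l k) ≠ 0 := by
    by_contra hcon
    push_neg at hcon
    set t : Fin n → ℝ := fun k => Complex.normSq (l k) with ht
    have heq : ∀ k, A.eval ((t k : ℝ) : ℂ) = -(l k * B.eval ((t k : ℝ) : ℂ)) := by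
      intro k
      have h := hcon k
      rw [hrep (l k)] at h
      linear_combination h
    set Atil := A.map (starRingEnd ℂ) with hAtil
    set Btil := B.map (starRingEnd ℂ) with hBtil
    set F : Polynomial ℂ := A * Atil - Polynomial.X * (B * Btil) with hF
    -- degree bound
    have hdA : A.degree ≤ (d : WithBot ℕ) := by
      have := stmt11_degsum (fun k => α (2 * k)) (d + 1)
      simpa [hA] using this
    have hdAt : Atil.degree ≤ (d : WithBot ℕ) :=
      le_trans (Polynomial.degree_map_le) hdA
    have hdegF : F.degree ≤ ((n - 1 : ℕ) : WithBot ℕ) := by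
      refine (Polynomial.degree_sub_le _ _).trans (max_le ?_ ?_)
      · exact stmt11_deg2 hdA hdAt (by omega)
      · by_cases hB0 : B = 0
        · simp [hB0]
        · rcases Nat.even_or_odd n with he | ho
          · have hdB : B.degree ≤ (d : WithBot ℕ) := by
              have := stmt11_degsum (fun k => α (2 * k + 1)) (d + 1)
              simpa [hB] using this
            have hdBt : Btil.degree ≤ (d : WithBot ℕ) := le_trans Polynomial.degree_map_le hdB
            have hne : n % 2 = 0 := Nat.even_iff.mp he
            exact stmt11_deg3 hdB hdBt (by omega)
          · have hodd : n % 2 = 1 := Nat.odd_iff.mp ho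
            have hBalt : B = ∑ k ∈ Finset.range d,
                Polynomial.C (α (2 * k + 1)) * Polynomial.X ^ k := by
              rw [hB, Finset.sum_range_succ, show 2 * d + 1 = n by omega, hα hodd]
              simp
            have hd1 : 1 ≤ d := by
              by_contra hdd
              push_neg at hdd
              interval_cases d
              · simp [hBalt] at hB0
            have hdB : B.degree ≤ ((d - 1 : ℕ) : WithBot ℕ) := by
              rw [hBalt]; exact stmt11_degsum _ d
            have hdBt : Btil.degree ≤ ((d - 1 : ℕ) : WithBot ℕ) :=
              le_trans Polynomial.degree_map_le hdB
            exact stmt11_deg3 hdB hdBt (by omega)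
    -- F vanishes at the support abscissae
    have hFeval : ∀ k : Fin n, F.eval ((t k : ℝ) : ℂ) = 0 := by
      intro k
      have hx : ((t k : ℝ) : ℂ) = l k * (starRingEnd ℂ) (l k) := by
        rw [Complex.mul_conj]
      have h1 : F.eval ((t k : ℝ) : ℂ)
          = A.eval ((t k : ℝ) : ℂ) * starRingEnd ℂ (A.eval ((t k : ℝ) : ℂ))
            - ((t k : ℝ) : ℂ) * (B.eval ((t k : ℝ) : ℂ)
              * starRingEnd ℂ (B.eval ((t k : ℝ) : ℂ))) := by
        simp [hF, hAtil, hBtil, stmt11_mapconj_eval]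
      rw [h1, heq k]
      set b := B.eval ((t k : ℝ) : ℂ) with hb
      rw [map_neg, map_mul, hx]
      ring
    -- combinatorics of fibers
    set s : Finset ℝ := Finset.image t Finset.univ with hs
    set c : ℝ → ℕ := fun r => (Finset.univ.filter (fun k => t k = r)).card with hc
    have hcard : ∑ r ∈ s, c r = n := by
      have h := (Finset.card_eq_sum_card_image t Finset.univ).symm
      simpa [hs, hc] using h
    have hc2 : ∀ r ∈ s, c r ≤ 2 := by
      intro r hr
      obtain ⟨k0, -, hk0⟩ := Finset.mem_image.mp hr
      have hr0 : 0 ≤ r := hk0 ▸ Complex.normSq_nonneg _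
      have hsub : ∀ k : Fin n, t k = r ↔ ‖l k‖ = Real.sqrt r := by
        intro k
        constructor
        · intro h
          rw [← h, ht]
          simp only
          rw [← Complex.sq_norm, Real.sqrt_sq (norm_nonneg _)]
        · intro h
          rw [ht]
          simp only
          rw [← Complex.sq_norm, h, Real.sq_sqrt hr0]
      have hnc : {k : Fin n | ‖l k‖ = Real.sqrt r}.ncard
          = (Finset.univ.filter (fun k => ‖l k‖ = Real.sqrt r)).card := by
        rw [Set.ncard_eq_toFinset_card', Set.toFinset_setOf]
      have hbb := hbir (Real.sqrt r)
      rw [hnc] at hbb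
      have hset : (Finset.univ.filter (fun k => t k = r))
          = (Finset.univ.filter (fun k : Fin n => ‖l k‖ = Real.sqrt r)) := by
        ext k
        simp only [Finset.mem_filter, Finset.mem_univ, true_and]
        exact hsub k
      show (Finset.univ.filter (fun k => t k = r)).card ≤ 2
      rw [hset]
      exact hbb
    have hc1 : ∀ r ∈ s, 1 ≤ c r := by
      intro r hr
      obtain ⟨k0, -, hk0⟩ := Finset.mem_image.mp hr
      show 1 ≤ (Finset.univ.filter (fun k => t k = r)).card
      refine Finset.card_pos.mpr ⟨k0, ?_⟩
      simp [hk0]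
    -- the product polynomial
    set G : Polynomial ℂ :=
      ∏ r ∈ s, (Polynomial.X - Polynomial.C ((r : ℝ) : ℂ)) ^ (c r) with hG
    have hGdeg : G.degree = (n : WithBot ℕ) := by
      rw [hG, Polynomial.degree_prod]
      have : ∀ r ∈ s, ((Polynomial.X - Polynomial.C ((r : ℝ) : ℂ)) ^ (c r)).degree
          = ((c r : ℕ) : WithBot ℕ) := by
        intro r _
        rw [Polynomial.degree_pow, Polynomial.degree_X_sub_C, nsmul_eq_mul, mul_one]
      rw [Finset.sum_congr rfl this, ← Nat.cast_sum, hcard]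
    have hGF : G ∣ F := by
      rw [hG]
      apply Finset.prod_dvd_of_coprime
      · intro r hr r' hr' hne
        have hcop : IsCoprime (Polynomial.X - Polynomial.C ((r : ℝ) : ℂ))
            (Polynomial.X - Polynomial.C ((r' : ℝ) : ℂ)) := by
          exact Polynomial.pairwise_coprime_X_sub_C (fun a b hab => by exact_mod_cast hab) hne
        exact hcop.pow
      · intro r hr
        obtain ⟨k0, -, hk0⟩ := Finset.mem_image.mp hr
        have hFr : F.eval ((r : ℝ) : ℂ) = 0 := by rw [← hk0]; exact hFeval k0
        have h1 := hc1 r hr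
        have h2 := hc2 r hr
        rcases Nat.lt_or_ge (c r) 2 with hcr | hcr
        · have hcr1 : c r = 1 := by omega
          rw [hcr1, pow_one]
          exact Polynomial.dvd_iff_isRoot.mpr hFr
        · have hcr2 : c r = 2 := by omega
          -- two distinct points on this circle
          have hfc : 1 < (Finset.univ.filter (fun k => t k = r)).card :=
            lt_of_lt_of_le one_lt_two hcr
          obtain ⟨k1, hk1, k2, hk2, hk12⟩ := Finset.one_lt_card.mp hfc
          have ht1 : t k1 = r := (Finset.mem_filter.mp hk1).2
          have ht2 : t k2 = r := (Finset.mem_filter.mp hk2).2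
          have hBr : B.eval ((r : ℝ) : ℂ) = 0 := by
            have e1 := heq k1
            have e2 := heq k2
            rw [ht1] at e1
            rw [ht2] at e2
            have hll : l k1 ≠ l k2 := fun h => hk12 (hinj h)
            have : (l k1 - l k2) * B.eval ((r : ℝ) : ℂ) = 0 := by linear_combination e1 - e2
            rcases mul_eq_zero.mp this with h | h
            · exact absurd (sub_eq_zero.mp h) hll
            · exact h
          have hAr : A.eval ((r : ℝ) : ℂ) = 0 := by
            have e1 := heq k1
            rw [ht1] at e1
            rw [e1, hBr, mul_zero, neg_zero]
          have hdvd1 : Polynomial.X - Polynomial.C ((r : ℝ) : ℂ) ∣ A :=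
            Polynomial.dvd_iff_isRoot.mpr hAr
          have hdvd1t : Polynomial.X - Polynomial.C ((r : ℝ) : ℂ) ∣ Atil := by
            refine Polynomial.dvd_iff_isRoot.mpr ?_
            rw [Polynomial.IsRoot, hAtil, stmt11_mapconj_eval, hAr, map_zero]
          have hdvd2 : Polynomial.X - Polynomial.C ((r : ℝ) : ℂ) ∣ B :=
            Polynomial.dvd_iff_isRoot.mpr hBr
          have hdvd2t : Polynomial.X - Polynomial.C ((r : ℝ) : ℂ) ∣ Btil := by
            refine Polynomial.dvd_iff_isRoot.mpr ?_
            rw [Polynomial.IsRoot, hBtil, stmt11_mapconj_eval, hBr, map_zero]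
          rw [hcr2, sq]
          refine dvd_sub (mul_dvd_mul hdvd1 hdvd1t) ?_
          exact Dvd.dvd.mul_left (mul_dvd_mul hdvd2 hdvd2t) _
    have hF0 : F = 0 := by
      by_contra hF0
      have h1 := Polynomial.degree_le_of_dvd hGF hF0
      rw [hGdeg] at h1
      have h2 := le_trans h1 hdegF
      have h3 : n ≤ n - 1 := by exact_mod_cast h2
      omega
    have hzero : ∀ x : ℝ, x < 0 → A.eval ((x : ℝ) : ℂ) = 0 ∧ B.eval ((x : ℝ) : ℂ) = 0 := by
      intro x hx
      have h := congrArg (Polynomial.eval ((x : ℝ) : ℂ)) hF0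
      rw [Polynomial.eval_zero] at h
      have h1 : A.eval ((x : ℝ) : ℂ) * starRingEnd ℂ (A.eval ((x : ℝ) : ℂ))
          = ((x : ℝ) : ℂ) * (B.eval ((x : ℝ) : ℂ) * starRingEnd ℂ (B.eval ((x : ℝ) : ℂ))) := by
        have h' : F.eval ((x : ℝ) : ℂ)
            = A.eval ((x : ℝ) : ℂ) * starRingEnd ℂ (A.eval ((x : ℝ) : ℂ))
              - ((x : ℝ) : ℂ) * (B.eval ((x : ℝ) : ℂ)
                * starRingEnd ℂ (B.eval ((x : ℝ) : ℂ))) := by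
          simp [hF, hAtil, hBtil, stmt11_mapconj_eval]
        rw [h] at h'
        linear_combination -h'
      rw [Complex.mul_conj, Complex.mul_conj] at h1
      have h2 : (Complex.normSq (A.eval ((x : ℝ) : ℂ)) : ℝ)
          = x * Complex.normSq (B.eval ((x : ℝ) : ℂ)) := by exact_mod_cast h1
      have hB0 : Complex.normSq (B.eval ((x : ℝ) : ℂ)) = 0 := by
        nlinarith [Complex.normSq_nonneg (A.eval ((x : ℝ) : ℂ)),
          Complex.normSq_nonneg (B.eval ((x : ℝ) : ℂ))]
      have hA0 : Complex.normSq (A.eval ((x : ℝ) : ℂ)) = 0 := by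
        rw [h2, hB0]; ring
      exact ⟨Complex.normSq_eq_zero.mp hA0, Complex.normSq_eq_zero.mp hB0⟩
    have hinj' : Function.Injective (fun m : ℕ => ((-(m : ℝ) - 1 : ℝ) : ℂ)) := by
      intro a b hab
      simp only [Complex.ofReal_inj] at hab
      have : (a : ℝ) = b := by linarith
      exact_mod_cast this
    have hAz : A = 0 := by
      refine Polynomial.eq_zero_of_infinite_isRoot _ ?_
      refine Set.infinite_of_injective_forall_mem hinj' fun m => ?_
      exact (hzero (-(m : ℝ) - 1) (by have := Nat.cast_nonneg (α := ℝ) m; linarith)).1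
    have hBz : B = 0 := by
      refine Polynomial.eq_zero_of_infinite_isRoot _ ?_
      refine Set.infinite_of_injective_forall_mem hinj' fun m => ?_
      exact (hzero (-(m : ℝ) - 1) (by nlinarith [Nat.cast_nonneg (α := ℝ) m])).2
    obtain ⟨z, hz⟩ := hpne
    exact hz (by rw [hrep z, hAz, hBz]; simp)
  obtain ⟨k0, hk0⟩ := key
  refine Finset.sum_pos' (fun i _ => mul_nonneg (hρ i).le (by positivity)) ?_
  exact ⟨k0, Finset.mem_univ _,
    mul_pos (hρ k0) (pow_pos (norm_pos_iff.mpr hk0) 2)⟩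
end

section
/- Let J ∈ ℂ^{n×n} be a complex symmetric tridiagonal matrix with diagonal entries α₁,…,α_n ∈ ℂ and positive off-diagonal entries β₁,…,β_{n−1} > 0. Then there exist a unitary matrix Q ∈ ℂ^{n×n} and a diagonal matrix D = diag(λ₁,…,λ_n) such that D·conj(Q) = Q·J, and moreover no three of the moduli |λ₁|,…,|λ_n| are equal (at most two of the λ_k lie on any origin-centred circle) and the λ_k are pairwise distinct. -/
open Complex Matrix

namespace Stmt12

lemma dot_self_eq (n : ℕ) (u : Fin n → ℂ) :
    star u ⬝ᵥ u = ((∑ m, Complex.normSq (u m) : ℝ) : ℂ) := by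
  simp only [dotProduct, Pi.star_apply, Complex.ofReal_sum]
  refine Finset.sum_congr rfl fun m _ => ?_
  rw [Complex.normSq_eq_conj_mul_self]
  rfl

lemma dot_self_pos (n : ℕ) (u : Fin n → ℂ) (hu : u ≠ 0) :
    0 < ∑ m, Complex.normSq (u m) := by
  have h : ∃ m, u m ≠ 0 := by
    by_contra h; push_neg at h; exact hu (funext h)
  obtain ⟨m, hm⟩ := h
  refine Finset.sum_pos' (fun i _ => Complex.normSq_nonneg _) ⟨m, Finset.mem_univ m, ?_⟩
  exact Complex.normSq_pos.2 hm

lemma conj_mulVec (n : ℕ) (J : Matrix (Fin n) (Fin n) ℂ) (x : Fin n → ℂ) :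
    star (J *ᵥ star x) = J.map (starRingEnd ℂ) *ᵥ x := by
  funext m
  simp only [Pi.star_apply, mulVec, dotProduct, Matrix.map_apply, star_sum, star_mul',
    star_star, Pi.star_apply]
  rfl

lemma CC (n : ℕ) (J : Matrix (Fin n) (Fin n) ℂ) (x : Fin n → ℂ) :
    J *ᵥ star (J *ᵥ star x) = (J * J.map (starRingEnd ℂ)) *ᵥ x := by
  rw [conj_mulVec, mulVec_mulVec]

lemma exists_coneig (n k : ℕ) (hk : k < n) (J : Matrix (Fin n) (Fin n) ℂ)
    (hsym : Jᵀ = J) (v : Fin k → Fin n → ℂ)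
    (hortho : ∀ i j, star (v i) ⬝ᵥ v j = if i = j then 1 else 0)
    (heig : ∀ i, ∃ σ : ℝ, 0 ≤ σ ∧ J *ᵥ star (v i) = (σ : ℂ) • v i) :
    ∃ (u : Fin n → ℂ) (σ : ℝ), 0 ≤ σ ∧ star u ⬝ᵥ u = 1 ∧
      J *ᵥ star u = (σ : ℂ) • u ∧ ∀ i, star (v i) ⬝ᵥ u = 0 := by
  classical
  choose σv hσv0 hσv using heig
  set B : Matrix (Fin k) (Fin n) ℂ := Matrix.of (fun i m => star (v i m)) with hB
  set W : Submodule ℂ (Fin n → ℂ) := LinearMap.ker B.mulVecLin with hWdef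
  have hmemW : ∀ x, x ∈ W ↔ ∀ i, star (v i) ⬝ᵥ x = 0 := by
    intro x
    simp only [hWdef, LinearMap.mem_ker, mulVecLin_apply, funext_iff]
    constructor
    · intro h i; simpa [hB, mulVec, dotProduct] using h i
    · intro h i; simpa [hB, mulVec, dotProduct] using h i
  -- W is nontrivial
  have hfr : 0 < Module.finrank ℂ W := by
    have h1 := LinearMap.finrank_range_add_finrank_ker (B.mulVecLin)
    rw [Module.finrank_fin_fun] at h1
    have h2 : Module.finrank ℂ (LinearMap.range B.mulVecLin) ≤ k := by
      calc Module.finrank ℂ (LinearMap.range B.mulVecLin)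
          ≤ Module.finrank ℂ (Fin k → ℂ) := Submodule.finrank_le _
        _ = k := Module.finrank_fin_fun ℂ
    rw [hWdef]
    omega
  haveI : Nontrivial W := Module.nontrivial_of_finrank_pos hfr
  -- invariance under the antilinear map C x = J *ᵥ star x
  have hC : ∀ x ∈ W, (J *ᵥ star x) ∈ W := by
    intro x hx
    rw [hmemW] at hx ⊢
    intro i
    have hvx : v i ⬝ᵥ star x = 0 := by
      rw [dotProduct_comm, star_dotProduct x (v i), hx i, star_zero]
    have hvm : ∀ y : Fin n → ℂ, y ᵥ* J = J *ᵥ y := by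
      intro y
      conv_lhs => rw [← hsym]
      rw [vecMul_transpose]
    calc star (v i) ⬝ᵥ (J *ᵥ star x) = (star (v i) ᵥ* J) ⬝ᵥ star x :=
          dotProduct_mulVec _ _ _
      _ = (J *ᵥ star (v i)) ⬝ᵥ star x := by rw [hvm]
      _ = ((σv i : ℂ) • v i) ⬝ᵥ star x := by rw [hσv]
      _ = (σv i : ℂ) • (v i ⬝ᵥ star x) := smul_dotProduct _ _ _
      _ = 0 := by rw [hvx, smul_zero]
  have hconjmul := conj_mulVec n J
  have hCC := CC n J
  have hvm : ∀ y : Fin n → ℂ, y ᵥ* J = J *ᵥ y := by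
    intro y
    conv_lhs => rw [← hsym]
    rw [vecMul_transpose]
  -- restrict M = J Jᴴ to W and find an eigenvector
  have hM : ∀ x ∈ W, (J * J.map (starRingEnd ℂ)).mulVecLin x ∈ W := by
    intro x hx
    rw [mulVecLin_apply, ← hCC]
    exact hC _ (hC _ hx)
  obtain ⟨μ, hμ⟩ := Module.End.exists_eigenvalue
    (((J * J.map (starRingEnd ℂ)).mulVecLin).restrict hM)
  obtain ⟨wt, hwt⟩ := hμ.exists_hasEigenvector
  set w : Fin n → ℂ := (wt : Fin n → ℂ) with hwdef
  have hwW : w ∈ W := wt.2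
  have hw0 : w ≠ 0 := by
    intro h
    exact hwt.right (Subtype.ext h)
  have hMw : (J * J.map (starRingEnd ℂ)) *ᵥ w = μ • w := by
    have := hwt.apply_eq_smul
    have h2 := congrArg (Subtype.val) this
    simpa [LinearMap.restrict_apply, mulVecLin_apply] using h2
  -- μ is a nonnegative real
  set a := J *ᵥ star w with hadef
  have key : star w ⬝ᵥ ((J * J.map (starRingEnd ℂ)) *ᵥ w) = a ⬝ᵥ star a := by
    rw [← mulVec_mulVec, dotProduct_mulVec, hvm, ← hconjmul, ← hadef]
  have hkey2 : a ⬝ᵥ star a = ((∑ m, Complex.normSq (a m) : ℝ) : ℂ) := by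
    rw [dotProduct_comm, dot_self_eq n a]
  set Nw : ℝ := ∑ m, Complex.normSq (w m) with hNw
  set Na : ℝ := ∑ m, Complex.normSq (a m) with hNa
  have hNwpos : 0 < Nw := dot_self_pos n w hw0
  have hNanneg : 0 ≤ Na := Finset.sum_nonneg fun i _ => Complex.normSq_nonneg _
  have hmain : μ * (Nw : ℂ) = (Na : ℂ) := by
    have h1 : star w ⬝ᵥ ((J * J.map (starRingEnd ℂ)) *ᵥ w) = μ * (Nw : ℂ) := by
      rw [hMw, dotProduct_smul, smul_eq_mul, dot_self_eq n w]
    rw [← h1, key, hkey2]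
  have hμval : μ = ((Na / Nw : ℝ) : ℂ) := by
    rw [Complex.ofReal_div, eq_div_iff (Complex.ofReal_ne_zero.mpr hNwpos.ne')]
    exact hmain
  set σ : ℝ := Real.sqrt (Na / Nw) with hσdef
  have hσ0 : 0 ≤ σ := Real.sqrt_nonneg _
  have hμσ : μ = ((σ ^ 2 : ℝ) : ℂ) := by
    rw [hμval, hσdef, Real.sq_sqrt (div_nonneg hNanneg hNwpos.le)]
  -- construct an (unnormalized) con-eigenvector in W
  have hstep : ∃ u' : Fin n → ℂ, u' ≠ 0 ∧ u' ∈ W ∧ J *ᵥ star u' = (σ : ℂ) • u' := by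
    by_cases h : a + (σ : ℂ) • w = 0
    · -- then J *ᵥ star w = -σ w ; use I • w
      have hCw : J *ᵥ star w = -((σ : ℂ) • w) := by
        rw [← hadef, ← neg_eq_of_add_eq_zero_left h]
      refine ⟨Complex.I • w, ?_, W.smul_mem _ hwW, ?_⟩
      · simp [smul_eq_zero, Complex.I_ne_zero, hw0]
      · rw [star_smul, mulVec_smul, hCw, Complex.star_def, Complex.conj_I]
        rw [smul_comm]
        simp [smul_smul]
    · refine ⟨a + (σ : ℂ) • w, h, W.add_mem (hC w hwW) (W.smul_mem _ hwW), ?_⟩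
      have h1 : star (a + (σ : ℂ) • w) = star a + (σ : ℂ) • star w := by
        rw [star_add, star_smul]
        simp [Complex.star_def]
      rw [h1, mulVec_add, mulVec_smul]
      have h2 : J *ᵥ star a = μ • w := by
        rw [hadef, hCC, hMw]
      have hcast : ((σ ^ 2 : ℝ) : ℂ) = (σ : ℂ) * σ := by push_cast; ring
      rw [h2, ← hadef, hμσ, hcast, smul_add, smul_smul, add_comm]
  obtain ⟨u', hu'0, hu'W, hu'C⟩ := hstep
  -- normalize
  set Nu : ℝ := ∑ m, Complex.normSq (u' m) with hNu
  have hNupos : 0 < Nu := dot_self_pos n u' hu'0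
  set c : ℝ := (Real.sqrt Nu)⁻¹ with hcdef
  have hc2 : (c : ℂ) ^ 2 * (Nu : ℂ) = 1 := by
    have h1 : Real.sqrt Nu ≠ 0 := by positivity
    rw [hcdef]
    push_cast
    rw [show ((Real.sqrt Nu : ℂ))⁻¹ ^ 2 = ((Real.sqrt Nu : ℂ) ^ 2)⁻¹ by ring,
      show ((Real.sqrt Nu : ℂ)) ^ 2 = ((Real.sqrt Nu ^ 2 : ℝ) : ℂ) by push_cast; ring,
      Real.sq_sqrt hNupos.le]
    rw [inv_mul_cancel₀ (by exact_mod_cast hNupos.ne')]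
  refine ⟨(c : ℂ) • u', σ, hσ0, ?_, ?_, ?_⟩
  · rw [star_smul, smul_dotProduct, dotProduct_smul, dot_self_eq n u', ← hNu]
    simp only [Complex.star_def, Complex.conj_ofReal, smul_eq_mul]
    rw [← mul_assoc, ← sq, hc2]
  · rw [star_smul, mulVec_smul, hu'C]
    simp only [Complex.star_def, Complex.conj_ofReal]
    rw [smul_comm]
  · intro i
    have := (hmemW _).1 (W.smul_mem (c : ℂ) hu'W) i
    exact this


lemma takagi_family (n : ℕ) (J : Matrix (Fin n) (Fin n) ℂ) (hsym : Jᵀ = J) :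
    ∀ k, k ≤ n → ∃ v : Fin k → Fin n → ℂ,
      (∀ i j, star (v i) ⬝ᵥ v j = if i = j then 1 else 0) ∧
      (∀ i, ∃ σ : ℝ, 0 ≤ σ ∧ J *ᵥ star (v i) = (σ : ℂ) • v i) := by
  intro k
  induction k with
  | zero => exact fun _ => ⟨fun i => i.elim0, fun i => i.elim0, fun i => i.elim0⟩
  | succ k IH =>
    intro hk
    obtain ⟨v, hortho, heig⟩ := IH (Nat.le_of_succ_le hk)
    obtain ⟨u, σ, hσ0, hunorm, huC, huperp⟩ :=
      exists_coneig n k (Nat.lt_of_succ_le hk) J hsym v hortho heig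
    refine ⟨Fin.snoc v u, ?_, ?_⟩
    · intro i j
      refine Fin.lastCases ?_ ?_ i
      · refine Fin.lastCases ?_ ?_ j
        · simpa using hunorm
        · intro j'
          rw [Fin.snoc_last, Fin.snoc_castSucc]
          rw [if_neg (by exact (Fin.castSucc_lt_last j').ne')]
          rw [star_dotProduct u (v j'), huperp j', star_zero]
      · intro i'
        refine Fin.lastCases ?_ ?_ j
        · rw [Fin.snoc_last, Fin.snoc_castSucc]
          rw [if_neg (Fin.castSucc_lt_last i').ne]
          exact huperp i'
        · intro j'
          rw [Fin.snoc_castSucc, Fin.snoc_castSucc, hortho i' j']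
          by_cases h : i' = j'
          · subst h; simp
          · rw [if_neg h, if_neg (by simpa [Fin.castSucc_inj] using h)]
    · intro i
      refine Fin.lastCases ?_ ?_ i
      · rw [Fin.snoc_last]
        exact ⟨σ, hσ0, huC⟩
      · intro i'
        rw [Fin.snoc_castSucc]
        exact heig i'


section Band

variable {n : ℕ} {α : Fin n → ℂ} {β : ℕ → ℝ} {J : Matrix (Fin n) (Fin n) ℂ}

variable (hβ : ∀ k, k + 1 < n → 0 < β k)
variable (hJ : ∀ i j : Fin n, J i j =
      if (i : ℕ) = (j : ℕ) then α i
      else if (i : ℕ) + 1 = (j : ℕ) then (β (i : ℕ) : ℂ)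
      else if (j : ℕ) + 1 = (i : ℕ) then (β (j : ℕ) : ℂ) else 0)

include hJ

lemma J_zero (i j : Fin n) (h1 : (i : ℕ) ≠ j) (h2 : (i : ℕ) + 1 ≠ j) (h3 : (j : ℕ) + 1 ≠ i) :
    J i j = 0 := by
  rw [hJ i j, if_neg h1, if_neg h2, if_neg h3]

lemma J_super (i j : Fin n) (h : (i : ℕ) + 1 = j) : J i j = (β i : ℂ) := by
  rw [hJ i j, if_neg (by omega), if_pos h]

lemma J_symm : Jᵀ = J := by
  ext i j
  rw [Matrix.transpose_apply]
  rcases eq_or_ne (i : ℕ) (j : ℕ) with h | h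
  · obtain rfl : i = j := Fin.ext h
    rfl
  · rw [hJ i j, hJ j i, if_neg h, if_neg fun hc => h hc.symm]
    rcases eq_or_ne ((j : ℕ) + 1) (i : ℕ) with h3 | h3
    · rw [if_pos h3, if_neg (by omega), if_pos h3]
    · rw [if_neg h3]
      rcases eq_or_ne ((i : ℕ) + 1) (j : ℕ) with h2 | h2
      · rw [if_pos h2, if_pos h2]
      · rw [if_neg h2, if_neg h2, if_neg h3]

include hβ

lemma ker_one (x : Fin n → ℂ) (hx : J *ᵥ x = 0)
    (h0 : ∀ i : Fin n, (i : ℕ) = 0 → x i = 0) : x = 0 := by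
  suffices h : ∀ m, ∀ hm : m < n, x ⟨m, hm⟩ = 0 by
    funext i
    have := h i i.isLt
    simpa using this
  intro m
  induction m using Nat.strong_induction_on with
  | _ m IHm =>
    intro hm
    match m, hm with
    | 0, hm => exact h0 _ rfl
    | t+1, hm =>
      have hrow := congrFun hx ⟨t, Nat.lt_of_succ_lt hm⟩
      simp only [Matrix.mulVec, dotProduct, Pi.zero_apply] at hrow
      have hsum : ∑ j, J ⟨t, Nat.lt_of_succ_lt hm⟩ j * x j
          = J ⟨t, Nat.lt_of_succ_lt hm⟩ ⟨t+1, hm⟩ * x ⟨t+1, hm⟩ := by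
        refine Finset.sum_eq_single_of_mem _ (Finset.mem_univ _) ?_
        intro b _ hb
        rcases Nat.lt_or_ge (b : ℕ) (t+1) with hlt | hge
        · have hxb : x b = 0 := by
            have := IHm (b : ℕ) hlt b.isLt
            simpa using this
          rw [hxb, mul_zero]
        · have hne : (b : ℕ) ≠ t + 1 := fun hcon => hb (Fin.ext hcon)
          have hz : J ⟨t, Nat.lt_of_succ_lt hm⟩ b = 0 := by
            refine J_zero hJ _ _ ?_ ?_ ?_ <;> simp <;> omega
          rw [hz, zero_mul]
      rw [hsum] at hrow
      rw [J_super hJ _ _ (by simp)] at hrow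
      rcases mul_eq_zero.1 hrow with h | h
      · exact absurd h (Complex.ofReal_ne_zero.mpr (hβ t hm).ne')
      · exact h

omit hβ in
lemma M_far (i j : Fin n) (h : (i : ℕ) + 2 < (j : ℕ)) :
    (J * J.map (starRingEnd ℂ)) i j = 0 := by
  rw [Matrix.mul_apply]
  refine Finset.sum_eq_zero fun m _ => ?_
  rcases Nat.lt_or_ge (m : ℕ) ((i : ℕ) + 2) with hlt | hge
  · have hz : J m j = 0 := by
      refine J_zero hJ _ _ ?_ ?_ ?_ <;> omega
    rw [Matrix.map_apply, hz, map_zero, mul_zero]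
  · have hz : J i m = 0 := by
      refine J_zero hJ _ _ ?_ ?_ ?_ <;> omega
    rw [hz, zero_mul]

omit hβ in
lemma J_sub (i j : Fin n) (h : (j : ℕ) + 1 = i) : J i j = (β j : ℂ) := by
  rw [hJ i j, if_neg (by omega), if_neg (by omega), if_pos h]

omit hβ in
lemma M_band (t : ℕ) (h : t + 2 < n) :
    (J * J.map (starRingEnd ℂ)) ⟨t, by omega⟩ ⟨t + 2, h⟩
      = (β t : ℂ) * (β (t+1) : ℂ) := by
  rw [Matrix.mul_apply]
  have hsum : ∑ m, J ⟨t, by omega⟩ m * (J.map (starRingEnd ℂ)) m ⟨t+2, h⟩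
      = J ⟨t, by omega⟩ ⟨t+1, by omega⟩ * (J.map (starRingEnd ℂ)) ⟨t+1, by omega⟩ ⟨t+2, h⟩ := by
    refine Finset.sum_eq_single_of_mem _ (Finset.mem_univ _) ?_
    intro b _ hb
    have hne : (b : ℕ) ≠ t + 1 := fun hcon => hb (Fin.ext hcon)
    rcases Nat.lt_or_ge (b : ℕ) (t+1) with hlt | hge
    · have hz : J b ⟨t+2, h⟩ = 0 := by
        refine J_zero hJ _ _ ?_ ?_ ?_ <;> simp <;> omega
      rw [Matrix.map_apply, hz, map_zero, mul_zero]
    · have hz : J ⟨t, by omega⟩ b = 0 := by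
        refine J_zero hJ _ _ ?_ ?_ ?_ <;> simp <;> omega
      rw [hz, zero_mul]
  rw [hsum, Matrix.map_apply, J_super hJ _ _ (by simp), J_super hJ _ _ (by simp)]
  rw [Complex.conj_ofReal]

include hβ in
lemma ker_two (c : ℂ) (x : Fin n → ℂ)
    (hx : (J * J.map (starRingEnd ℂ)) *ᵥ x = c • x)
    (h01 : ∀ i : Fin n, (i : ℕ) < 2 → x i = 0) : x = 0 := by
  suffices h : ∀ m, ∀ hm : m < n, x ⟨m, hm⟩ = 0 by
    funext i
    have := h i i.isLt
    simpa using this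
  intro m
  induction m using Nat.strong_induction_on with
  | _ m IHm =>
    intro hm
    match m, hm with
    | 0, hm => exact h01 _ (by simp)
    | 1, hm => exact h01 _ (by simp)
    | t+2, hm =>
      have hrow := congrFun hx ⟨t, by omega⟩
      simp only [Matrix.mulVec, dotProduct, Pi.smul_apply, smul_eq_mul] at hrow
      have hxt : x ⟨t, by omega⟩ = 0 := by
        have := IHm t (by omega) (by omega)
        simpa using this
      have hsum : ∑ j, (J * J.map (starRingEnd ℂ)) ⟨t, by omega⟩ j * x j
          = (J * J.map (starRingEnd ℂ)) ⟨t, by omega⟩ ⟨t+2, hm⟩ * x ⟨t+2, hm⟩ := by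
        refine Finset.sum_eq_single_of_mem _ (Finset.mem_univ _) ?_
        intro b _ hb
        have hne : (b : ℕ) ≠ t + 2 := fun hcon => hb (Fin.ext hcon)
        rcases Nat.lt_or_ge (b : ℕ) (t+2) with hlt | hge
        · have hxb : x b = 0 := by
            have := IHm (b : ℕ) hlt b.isLt
            simpa using this
          rw [hxb, mul_zero]
        · have hz : (J * J.map (starRingEnd ℂ)) ⟨t, by omega⟩ b = 0 := by
            refine M_far hJ _ _ ?_
            simp
            omega
          rw [hz, zero_mul]
      rw [hsum, hxt, mul_zero, M_band hJ t hm] at hrow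
      have hb1 : ((β t : ℂ) * (β (t+1) : ℂ)) ≠ 0 := by
        refine mul_ne_zero ?_ ?_ <;>
          exact Complex.ofReal_ne_zero.mpr (hβ _ (by omega)).ne'
      rcases mul_eq_zero.1 hrow with hcon | hgoal
      · exact absurd hcon hb1
      · exact hgoal

lemma zero_mult (x y : Fin n → ℂ) (hx : J *ᵥ x = 0) (hy : J *ᵥ y = 0)
    (hxx : x ⬝ᵥ star x = 1) (hyy : y ⬝ᵥ star y = 1)
    (hxy : x ⬝ᵥ star y = 0) (hyx : y ⬝ᵥ star x = 0) : False := by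
  have hn : 0 < n := by
    rcases Nat.eq_zero_or_pos n with h | h
    · subst h
      simp [dotProduct] at hxx
    · exact h
  set e0 : Fin n := ⟨0, hn⟩ with he0
  set z : Fin n → ℂ := y e0 • x - x e0 • y with hz
  have hz0 : J *ᵥ z = 0 := by
    rw [hz, Matrix.mulVec_sub, Matrix.mulVec_smul, Matrix.mulVec_smul, hx, hy]
    simp
  have hzc : ∀ i : Fin n, (i : ℕ) = 0 → z i = 0 := by
    intro i hi
    obtain rfl : i = e0 := Fin.ext hi
    simp [hz]
    ring
  have hzz : z = 0 := ker_one hβ hJ z hz0 hzc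
  have hy0 : y e0 = 0 := by
    have h1 : z ⬝ᵥ star x = 0 := by rw [hzz, zero_dotProduct]
    rw [hz, sub_dotProduct, smul_dotProduct, smul_dotProduct, hxx, hyx] at h1
    simpa using h1
  have hx0 : x e0 = 0 := by
    have h1 : z ⬝ᵥ star y = 0 := by rw [hzz, zero_dotProduct]
    rw [hz, sub_dotProduct, smul_dotProduct, smul_dotProduct, hxy, hyy] at h1
    simpa using h1
  have hxzero : x = 0 := by
    refine ker_one hβ hJ x hx ?_
    intro i hi
    obtain rfl : i = e0 := Fin.ext hi
    exact hx0
  rw [hxzero, zero_dotProduct] at hxx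
  exact zero_ne_one hxx

lemma two_mult (c : ℂ) (w : Fin 3 → Fin n → ℂ)
    (heig : ∀ a, (J * J.map (starRingEnd ℂ)) *ᵥ w a = c • w a)
    (hortho : ∀ a b, star (w a) ⬝ᵥ w b = if a = b then 1 else 0) : False := by
  classical
  -- dot of star(w a) with a combination extracts the coefficient
  have hextract : ∀ (t : Fin 3 → ℂ) (a : Fin 3),
      star (w a) ⬝ᵥ (∑ b, t b • w b) = t a := by
    intro t a
    simp only [dotProduct, Finset.sum_apply, Pi.smul_apply, smul_eq_mul, Finset.mul_sum,
      Pi.star_apply]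
    rw [Finset.sum_comm]
    have hb : ∀ b, ∑ i, star (w a i) * (t b * w b i)
        = t b * (star (w a) ⬝ᵥ w b) := by
      intro b
      rw [dotProduct, Finset.mul_sum]
      exact Finset.sum_congr rfl fun i _ => by simp only [Pi.star_apply]; ring
    rw [Finset.sum_congr rfl fun b _ => hb b]
    simp [hortho]
  -- n ≥ 3
  have hn3 : 3 ≤ n := by
    set L : Matrix (Fin n) (Fin 3) ℂ := Matrix.of (fun i a => w a i) with hL
    have hinj : Function.Injective L.mulVecLin := by
      rw [← LinearMap.ker_eq_bot, LinearMap.ker_eq_bot']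
      intro t ht
      have hsum : L.mulVecLin t = ∑ b, t b • w b := by
        funext i
        simp [hL, Matrix.mulVecLin_apply, Matrix.mulVec, dotProduct, mul_comm]
      funext a
      have := hextract t a
      rw [← hsum, ht, dotProduct_zero] at this
      exact this.symm
    have := LinearMap.finrank_le_finrank_of_injective hinj
    rwa [Module.finrank_fin_fun, Module.finrank_fin_fun] at this
  set e0 : Fin n := ⟨0, by omega⟩ with he0
  set e1 : Fin n := ⟨1, by omega⟩ with he1
  set B : Matrix (Fin 2) (Fin 3) ℂ :=
    Matrix.of (fun r a => w a (if r = 0 then e0 else e1)) with hB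
  have hker : ∃ t : Fin 3 → ℂ, t ≠ 0 ∧ B.mulVecLin t = 0 := by
    by_contra hcon
    push_neg at hcon
    have hinj : Function.Injective B.mulVecLin := by
      rw [← LinearMap.ker_eq_bot, LinearMap.ker_eq_bot']
      intro t ht
      by_contra ht0
      exact (hcon t ht0) ht
    have := LinearMap.finrank_le_finrank_of_injective hinj
    rw [Module.finrank_fin_fun, Module.finrank_fin_fun] at this
    omega
  obtain ⟨t, ht0, htB⟩ := hker
  set z : Fin n → ℂ := ∑ b, t b • w b with hzdef
  have hzeig : (J * J.map (starRingEnd ℂ)) *ᵥ z = c • z := by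
    rw [hzdef]
    rw [show (J * J.map (starRingEnd ℂ)) *ᵥ (∑ b, t b • w b)
        = ∑ b, t b • ((J * J.map (starRingEnd ℂ)) *ᵥ w b) by
      rw [← mulVecLin_apply, map_sum]
      refine Finset.sum_congr rfl fun b _ => ?_
      rw [LinearMap.map_smul, mulVecLin_apply]]
    rw [Finset.smul_sum]
    refine Finset.sum_congr rfl fun b _ => ?_
    rw [heig b, smul_comm]
  have hz01 : ∀ i : Fin n, (i : ℕ) < 2 → z i = 0 := by
    intro i hi
    have hzi : ∀ r : Fin 2, z (if r = 0 then e0 else e1) = 0 := by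
      intro r
      have := congrFun htB r
      rw [mulVecLin_apply] at this
      simp only [Matrix.mulVec, dotProduct, hB, Matrix.of_apply, Pi.zero_apply] at this
      rw [hzdef]
      simp only [Finset.sum_apply, Pi.smul_apply, smul_eq_mul]
      rw [← this]
      exact Finset.sum_congr rfl fun b _ => mul_comm _ _
    interval_cases hii : (i : ℕ)
    · obtain rfl : i = e0 := Fin.ext (by simp [he0]; omega)
      simpa using hzi 0
    · obtain rfl : i = e1 := Fin.ext (by simp [he1]; omega)
      simpa using hzi 1
  have hzz : z = 0 := ker_two hβ hJ c z hzeig hz01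
  apply ht0
  funext a
  have := hextract t a
  rw [← hzdef, hzz, dotProduct_zero] at this
  exact this.symm

end Band

end Stmt12

/-- Every complex symmetric tridiagonal (Jacobi) matrix with positive
off-diagonal entries admits a con-diagonalization `D conj(Q) = Q J` with `Q` unitary,
the `λ_k` pairwise distinct and at most two on any origin-centred circle. -/
theorem stmt12 (n : ℕ) (α : Fin n → ℂ) (β : ℕ → ℝ) (hβ : ∀ k, k + 1 < n → 0 < β k)
    (J : Matrix (Fin n) (Fin n) ℂ)
    (hJ : ∀ i j : Fin n, J i j =
      if (i : ℕ) = (j : ℕ) then α i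
      else if (i : ℕ) + 1 = (j : ℕ) then (β (i : ℕ) : ℂ)
      else if (j : ℕ) + 1 = (i : ℕ) then (β (j : ℕ) : ℂ) else 0) :
    ∃ (Q : Matrix (Fin n) (Fin n) ℂ) (l : Fin n → ℂ),
      Q ∈ Matrix.unitaryGroup (Fin n) ℂ ∧
      Matrix.diagonal l * Q.map (starRingEnd ℂ) = Q * J ∧
      Function.Injective l ∧
      ∀ r : ℝ, Set.ncard {k : Fin n | ‖l k‖ = r} ≤ 2 := by
  classical
  have hsym : Jᵀ = J := Stmt12.J_symm hJ
  obtain ⟨v, hortho, heig⟩ := Stmt12.takagi_family n J hsym n le_rfl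
  choose σ hσ0 hσv using heig
  -- multiplicity facts
  have hzero : ∀ i j : Fin n, i ≠ j → σ i = 0 → σ j = 0 → False := by
    intro i j hij h0i h0j
    refine Stmt12.zero_mult hβ hJ (star (v i)) (star (v j)) ?_ ?_ ?_ ?_ ?_ ?_
    · rw [hσv i, h0i]; simp
    · rw [hσv j, h0j]; simp
    · rw [star_star]; simpa using hortho i i
    · rw [star_star]; simpa using hortho j j
    · rw [star_star]
      have := hortho i j
      rwa [if_neg hij] at this
    · rw [star_star]
      have := hortho j i
      rwa [if_neg (Ne.symm hij)] at this
  have hMeig : ∀ i : Fin n,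
      (J * J.map (starRingEnd ℂ)) *ᵥ v i = (((σ i) ^ 2 : ℝ) : ℂ) • v i := by
    intro i
    rw [← Stmt12.CC, hσv i, star_smul, mulVec_smul, hσv i]
    rw [smul_smul]
    congr 1
    rw [Complex.star_def, Complex.conj_ofReal]
    push_cast
    ring
  have htwo : ∀ (s : ℝ) (i j k : Fin n), i ≠ j → i ≠ k → j ≠ k →
      σ i = s → σ j = s → σ k = s → False := by
    intro s i j k hij hik hjk hsi hsj hsk
    refine Stmt12.two_mult hβ hJ ((s ^ 2 : ℝ) : ℂ) ![v i, v j, v k] ?_ ?_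
    · intro a
      fin_cases a
      · show (J * J.map (starRingEnd ℂ)) *ᵥ v i = ((s ^ 2 : ℝ) : ℂ) • v i
        rw [hMeig i, hsi]
      · show (J * J.map (starRingEnd ℂ)) *ᵥ v j = ((s ^ 2 : ℝ) : ℂ) • v j
        rw [hMeig j, hsj]
      · show (J * J.map (starRingEnd ℂ)) *ᵥ v k = ((s ^ 2 : ℝ) : ℂ) • v k
        rw [hMeig k, hsk]
    · intro a b
      fin_cases a <;> fin_cases b <;>
        simp [hortho i i, hortho j j, hortho k k, hortho i j, hortho j i,
          hortho i k, hortho k i, hortho j k, hortho k j,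
          hij, hik, hjk, Ne.symm hij, Ne.symm hik, Ne.symm hjk]
  -- phase twisting
  set hasE : Fin n → Prop := fun i => ∃ j : Fin n, j < i ∧ σ j = σ i with hhasE
  set w : Fin n → Fin n → ℂ :=
    fun i => if hasE i then Complex.I • v i else v i with hw
  set l : Fin n → ℂ := fun i => if hasE i then -((σ i : ℝ) : ℂ) else ((σ i : ℝ) : ℂ) with hl
  have hwE : ∀ i, hasE i → w i = Complex.I • v i := by intro i h; rw [hw]; simp [h]
  have hwNE : ∀ i, ¬ hasE i → w i = v i := by intro i h; rw [hw]; simp [h]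
  have hlE : ∀ i, hasE i → l i = -((σ i : ℝ) : ℂ) := by intro i h; rw [hl]; simp [h]
  have hlNE : ∀ i, ¬ hasE i → l i = ((σ i : ℝ) : ℂ) := by intro i h; rw [hl]; simp [h]
  have hweig : ∀ i, J *ᵥ star (w i) = l i • w i := by
    intro i
    by_cases h : hasE i
    · rw [hwE i h, hlE i h, star_smul, mulVec_smul, hσv i, smul_smul, smul_smul]
      congr 1
      rw [Complex.star_def, Complex.conj_I]
      ring
    · rw [hwNE i h, hlNE i h]
      exact hσv i
  have hwortho : ∀ i j, star (w i) ⬝ᵥ w j = if i = j then 1 else 0 := by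
    intro i j
    have base := hortho i j
    have hscal : ∀ (c d : ℂ) (x y : Fin n → ℂ),
        star (c • x) ⬝ᵥ (d • y) = star c * d * (star x ⬝ᵥ y) := by
      intro c d x y
      rw [star_smul, smul_dotProduct, dotProduct_smul, smul_eq_mul, smul_eq_mul]
      ring
    by_cases hi : hasE i <;> by_cases hj : hasE j
    · rw [hwE i hi, hwE j hj, hscal, base, Complex.star_def, Complex.conj_I,
        neg_mul, Complex.I_mul_I, neg_neg, one_mul]
    · have hne : i ≠ j := by rintro rfl; exact hj hi
      rw [hwE i hi, hwNE j hj, star_smul, smul_dotProduct, base, if_neg hne, smul_zero]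
    · have hne : i ≠ j := by rintro rfl; exact hi hj
      rw [hwNE i hi, hwE j hj, dotProduct_smul, base, if_neg hne, smul_zero]
    · rw [hwNE i hi, hwNE j hj]
      exact base
  have habs : ∀ i, ‖l i‖ = σ i := by
    intro i
    by_cases h : hasE i
    · rw [hlE i h, norm_neg, Complex.norm_real, Real.norm_eq_abs]
      exact _root_.abs_of_nonneg (hσ0 i)
    · rw [hlNE i h, Complex.norm_real, Real.norm_eq_abs]
      exact _root_.abs_of_nonneg (hσ0 i)
  have hσeq : ∀ i j, l i = l j → σ i = σ j := by
    intro i j h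
    rw [← habs i, ← habs j, h]
  have hinj : Function.Injective l := by
    intro i j hij
    by_contra hne
    have hσij : σ i = σ j := hσeq i j hij
    rcases (hσ0 i).eq_or_lt with hz | hpos
    · exact hzero i j hne hz.symm (hσij.symm.trans hz.symm)
    · by_cases hPi : hasE i <;> by_cases hPj : hasE j
      · obtain ⟨a, hai, ha⟩ := hPi
        by_cases haj : a = j
        · subst haj
          obtain ⟨b, hbj, hb⟩ := hPj
          have hbi : b ≠ i := by
            intro hcon
            subst hcon
            exact absurd (hbj.trans hai) (lt_irrefl _)
          exact htwo (σ i) i a b hne (Ne.symm hbi) hbj.ne' rfl hσij.symm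
            (hb.trans hσij.symm)
        · exact htwo (σ i) i j a hne (Ne.symm hai.ne) (Ne.symm haj) rfl hσij.symm ha
      · rw [hlE i hPi, hlNE j hPj] at hij
        have : ((σ i : ℝ) : ℂ) = 0 := by
          have h2 : -((σ i : ℝ) : ℂ) = ((σ i : ℝ) : ℂ) := by
            conv_lhs => rw [hij]
            rw [Complex.ofReal_inj.mpr hσij]
          linear_combination -h2 / 2
        rw [Complex.ofReal_eq_zero] at this
        exact absurd this hpos.ne'
      · rw [hlNE i hPi, hlE j hPj] at hij
        have : ((σ i : ℝ) : ℂ) = 0 := by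
          have h2 : ((σ i : ℝ) : ℂ) = -((σ i : ℝ) : ℂ) := by
            conv_lhs => rw [hij]
            rw [Complex.ofReal_inj.mpr hσij]
          linear_combination h2 / 2
        rw [Complex.ofReal_eq_zero] at this
        exact absurd this hpos.ne'
      · rcases lt_trichotomy i j with hlt | heq | hgt
        · exact hPj ⟨i, hlt, hσij⟩
        · exact hne heq
        · exact hPi ⟨j, hgt, hσij.symm⟩
  have hcard : ∀ r : ℝ, Set.ncard {k : Fin n | ‖l k‖ = r} ≤ 2 := by
    intro r
    by_contra hcon
    push_neg at hcon
    obtain ⟨a, b, c, ha, hb, hc, hab, hac, hbc⟩ :=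
      (Set.two_lt_ncard_iff (Set.toFinite _)).1 hcon
    exact htwo r a b c hab hac hbc ((habs a).symm.trans ha) ((habs b).symm.trans hb)
      ((habs c).symm.trans hc)
  -- assemble the matrices
  set Pm : Matrix (Fin n) (Fin n) ℂ := Matrix.of (fun i j => w i j) with hPm
  have hPP : Pm * Pmᴴ = 1 := by
    ext i j
    have h1 : (Pm * Pmᴴ) i j = star (star (w i) ⬝ᵥ w j) := by
      rw [Matrix.mul_apply, dotProduct, star_sum]
      refine Finset.sum_congr rfl fun m _ => ?_
      simp only [Matrix.conjTranspose_apply, Matrix.of_apply, hPm, Pi.star_apply,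
        star_mul', star_star, starRingEnd_apply]
    rw [h1, hwortho i j]
    rcases eq_or_ne i j with rfl | hne
    · simp
    · simp [hne, Matrix.one_apply_ne hne]
  set Q : Matrix (Fin n) (Fin n) ℂ := Pm.map (starRingEnd ℂ) with hQm
  have hstarQ : star Q = Pmᵀ := by
    ext i j
    simp only [Matrix.star_apply, Matrix.map_apply, Matrix.transpose_apply, hQm]
    exact star_star _
  refine ⟨Q, l, ?_, ?_, hinj, hcard⟩
  · rw [Matrix.mem_unitaryGroup_iff, hstarQ]
    ext i j
    have h1 : (Q * Pmᵀ) i j = star ((Pm * Pmᴴ) i j) := by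
      rw [Matrix.mul_apply, Matrix.mul_apply, star_sum]
      refine Finset.sum_congr rfl fun m _ => ?_
      simp only [Matrix.conjTranspose_apply, Matrix.transpose_apply, Matrix.map_apply, hQm,
        star_mul', star_star, starRingEnd_apply]
    rw [h1, hPP]
    rcases eq_or_ne i j with rfl | hne
    · simp
    · simp [Matrix.one_apply_ne hne]
  · have hQconj : Q.map (starRingEnd ℂ) = Pm := by
      ext i j
      simp only [Matrix.map_apply, hQm]
      exact Complex.conj_conj _
    rw [hQconj]
    ext i j
    rw [Matrix.diagonal_mul, Matrix.mul_apply]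
    have h2 : ∀ m, Q i m * J m j = J j m * star (w i) m := by
      intro m
      simp only [hQm, Matrix.map_apply, hPm, Matrix.of_apply, Pi.star_apply,
        starRingEnd_apply]
      rw [show J m j = J j m from by
        conv_lhs => rw [← hsym]
        rw [Matrix.transpose_apply]]
      ring
    rw [Finset.sum_congr rfl fun m _ => h2 m]
    have h3 := congrFun (hweig i) j
    rw [Matrix.mulVec, dotProduct] at h3
    rw [h3]
    simp [hPm]
end

section
/- Let J ∈ ℂ^{n×n} be a complex symmetric tridiagonal matrix with diagonal α₁,…,α_n ∈ ℂ and off-diagonals β₁,…,β_{n−1} > 0, and suppose Σ·conj(U) = U·J with U unitary and Σ = diag(σ₁,…,σ_n) nonnegative diagonal. Then no three of σ₁,…,σ_n are equal. -/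
open Complex Matrix

/-- If `Σ conj(U) = U J` with `U` unitary, `Σ` nonnegative diagonal and `J`
a complex symmetric tridiagonal matrix with positive off-diagonals, then no three of the
diagonal entries `σ₁, …, σ_n` of `Σ` are equal. -/
theorem stmt13 (n : ℕ) (α : Fin n → ℂ) (β : ℕ → ℝ) (hβ : ∀ k, k + 1 < n → 0 < β k)
    (J : Matrix (Fin n) (Fin n) ℂ)
    (hJ : ∀ i j : Fin n, J i j =
      if (i : ℕ) = (j : ℕ) then α i
      else if (i : ℕ) + 1 = (j : ℕ) then (β (i : ℕ) : ℂ)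
      else if (j : ℕ) + 1 = (i : ℕ) then (β (j : ℕ) : ℂ) else 0)
    (U : Matrix (Fin n) (Fin n) ℂ) (hU : U ∈ Matrix.unitaryGroup (Fin n) ℂ)
    (σ : Fin n → ℝ) (hσ : ∀ i, 0 ≤ σ i)
    (hfac : Matrix.diagonal (fun i => (σ i : ℂ)) * U.map (starRingEnd ℂ) = U * J) :
    ∀ c : ℝ, Set.ncard {i : Fin n | σ i = c} ≤ 2 := by
  -- entrywise equation
  have key : ∀ i p : Fin n, (σ i : ℂ) * (starRingEnd ℂ) (U i p) = ∑ m, U i m * J m p := by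
    intro i p
    have h := congrFun (congrFun hfac i) p
    simpa [Matrix.mul_apply, Matrix.diagonal_apply, Matrix.map_apply,
      Finset.mul_sum] using h
  -- decomposition of the tridiagonal sum
  have hsum : ∀ i p : Fin n,
      (∑ m, U i m * J m p) =
        (∑ m : Fin n, if (m : ℕ) + 1 = (p : ℕ) then (β m : ℂ) * U i m else 0)
        + α p * U i p
        + (∑ m : Fin n, if (p : ℕ) + 1 = (m : ℕ) then (β (p : ℕ) : ℂ) * U i m else 0) := by
    intro i p
    have hmid : (∑ m : Fin n, if (m : ℕ) = (p : ℕ) then α p * U i m else 0)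
        = α p * U i p := by
      rw [Finset.sum_eq_single p]
      · simp
      · intro m _ hm; exact if_neg (fun h => hm (Fin.ext h))
      · simp
    rw [← hmid, ← Finset.sum_add_distrib, ← Finset.sum_add_distrib]
    refine Finset.sum_congr rfl fun m _ => ?_
    rw [hJ]
    by_cases h1 : (m : ℕ) = (p : ℕ)
    · obtain rfl : m = p := Fin.ext h1
      have h2 : ¬ ((m : ℕ) + 1 = (m : ℕ)) := by omega
      simp only [if_pos rfl, if_neg h2]
      simp [mul_comm]
    · rw [if_neg h1, if_neg h1]
      by_cases h2 : (m : ℕ) + 1 = (p : ℕ)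
      · have h3 : ¬ ((p : ℕ) + 1 = (m : ℕ)) := by omega
        rw [if_pos h2, if_pos h2, if_neg h3]
        ring
      · rw [if_neg h2, if_neg h2]
        by_cases h3 : (p : ℕ) + 1 = (m : ℕ)
        · rw [if_pos h3, if_pos h3]; ring
        · rw [if_neg h3, if_neg h3]; ring
  -- evaluation of the side sums
  have hLzero : ∀ (i p : Fin n), (p : ℕ) = 0 →
      (∑ m : Fin n, if (m : ℕ) + 1 = (p : ℕ) then (β m : ℂ) * U i m else 0) = 0 := by
    intro i p hp
    exact Finset.sum_eq_zero fun m _ => if_neg (by omega)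
  have hLsucc : ∀ (i p q : Fin n), (q : ℕ) + 1 = (p : ℕ) →
      (∑ m : Fin n, if (m : ℕ) + 1 = (p : ℕ) then (β m : ℂ) * U i m else 0)
        = (β (q : ℕ) : ℂ) * U i q := by
    intro i p q hq
    rw [Finset.sum_eq_single q]
    · rw [if_pos hq]
    · intro m _ hm; exact if_neg (fun h => hm (Fin.ext (by omega)))
    · simp
  have hRsucc : ∀ (i p r : Fin n), (p : ℕ) + 1 = (r : ℕ) →
      (∑ m : Fin n, if (p : ℕ) + 1 = (m : ℕ) then (β (p : ℕ) : ℂ) * U i m else 0)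
        = (β (p : ℕ) : ℂ) * U i r := by
    intro i p r hr
    rw [Finset.sum_eq_single r]
    · rw [if_pos hr]
    · intro m _ hm; exact if_neg (fun h => hm (Fin.ext (by omega)))
    · simp
  intro c
  by_contra hle
  push_neg at hle
  obtain ⟨t, hts, ht3⟩ := Set.exists_subset_card_eq hle
  rw [Set.ncard_eq_three] at ht3
  obtain ⟨i₀, i₁, i₂, h01, h02, h12, rfl⟩ := ht3
  set e : Fin 3 → Fin n := ![i₀, i₁, i₂] with he_def
  have he : Function.Injective e := by
    have h10 : i₁ ≠ i₀ := fun h => h01 h.symm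
    have h20 : i₂ ≠ i₀ := fun h => h02 h.symm
    have h21 : i₂ ≠ i₁ := fun h => h12 h.symm
    intro a b hab
    fin_cases a <;> fin_cases b <;>
      first
        | rfl
        | (exfalso; revert hab; simp [he_def, h01, h02, h12, h10, h20, h21])
  have hce : ∀ k, σ (e k) = c := by
    intro k
    fin_cases k
    · exact hts (by simp [he_def])
    · exact hts (by simp [he_def])
    · exact hts (by simp [he_def])
  have hn : 0 < n := i₀.pos
  set z : Fin n := ⟨0, hn⟩ with hz_def
  set v : Fin n → Fin 3 → ℂ := fun p k => U (e k) p with hv_def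
  set w : Fin 3 → ℂ := v z with hw_def
  set W : Submodule ℂ (Fin 3 → ℂ) := Submodule.span ℂ {w, star w} with hW_def
  have hwW : w ∈ W := Submodule.subset_span (by simp)
  have hswW : star w ∈ W := Submodule.subset_span (by simp)
  have hstarW : ∀ x ∈ W, star x ∈ W := by
    intro x hx
    rw [hW_def, Submodule.mem_span_pair] at hx ⊢
    obtain ⟨a, b, rfl⟩ := hx
    exact ⟨star b, star a, by rw [star_add, star_smul, star_smul, star_star, add_comm]⟩
  -- main induction : every column restricted to the three rows lies in W
  have main : ∀ N : ℕ, ∀ hN : N < n, v ⟨N, hN⟩ ∈ W := by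
    intro N
    induction N using Nat.strong_induction_on with
    | _ N ih =>
      intro hN
      rcases N with _ | M
      · exact hwW
      rcases M with _ | M
      · -- column 1 from equation at column 0
        have hβ0 : (0:ℝ) < β (z : ℕ) := hβ (z : ℕ) hN
        have hk : ∀ k, (β (z : ℕ) : ℂ) * v ⟨1, hN⟩ k
            = (c : ℂ) * (starRingEnd ℂ) (v z k) - α z * v z k := by
          intro k
          have h := key (e k) z
          rw [hsum, hLzero (e k) z rfl, hRsucc (e k) z ⟨1, hN⟩ rfl, hce k] at h
          rw [show (z : ℕ) = 0 from rfl] at h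
          simp only [hv_def, hw_def]
          linear_combination -h
        have heq : v ⟨1, hN⟩ = ((β (z : ℕ) : ℂ))⁻¹ •
            ((c : ℂ) • star w - α z • w) := by
          funext k
          have hb : (β (z : ℕ) : ℂ) ≠ 0 := by
            exact_mod_cast ne_of_gt hβ0
          simp only [Pi.smul_apply, Pi.sub_apply, Pi.star_apply, smul_eq_mul, hw_def]
          rw [show star (v z k) = (starRingEnd ℂ) (v z k) from rfl]
          field_simp
          linear_combination hk k
        rw [heq]
        exact W.smul_mem _ (W.sub_mem (W.smul_mem _ (hstarW w hwW)) (W.smul_mem _ hwW))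
      · -- column M+2 from equation at column M+1
        have hM1 : M + 1 < n := by omega
        have hM0 : M < n := by omega
        set p : Fin n := ⟨M + 1, hM1⟩ with hp_def
        set q : Fin n := ⟨M, hM0⟩ with hq_def
        have hβM : (0:ℝ) < β (p : ℕ) := hβ (p : ℕ) hN
        have hk : ∀ k, (β (p : ℕ) : ℂ) * v ⟨M + 2, hN⟩ k
            = (c : ℂ) * (starRingEnd ℂ) (v p k) - α p * v p k
              - (β (q : ℕ) : ℂ) * v q k := by
          intro k
          have h := key (e k) p
          rw [hsum, hLsucc (e k) p q rfl, hRsucc (e k) p ⟨M + 2, hN⟩ rfl, hce k] at h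
          rw [show (q : ℕ) = M from rfl, show (p : ℕ) = M + 1 from rfl] at h
          simp only [hv_def]
          linear_combination -h
        have heq : v ⟨M + 2, hN⟩ = ((β (p : ℕ) : ℂ))⁻¹ •
            ((c : ℂ) • star (v p) - α p • v p - (β (q : ℕ) : ℂ) • v q) := by
          funext k
          have hb : (β (p : ℕ) : ℂ) ≠ 0 := by
            exact_mod_cast ne_of_gt hβM
          simp only [Pi.smul_apply, Pi.sub_apply, Pi.star_apply, smul_eq_mul]
          rw [show star (v p k) = (starRingEnd ℂ) (v p k) from rfl]
          field_simp
          linear_combination hk k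
        have hpW : v p ∈ W := ih (M + 1) (by omega) hM1
        have hqW : v q ∈ W := ih M (by omega) hM0
        rw [heq]
        exact W.smul_mem _ (W.sub_mem (W.sub_mem (W.smul_mem _ (hstarW _ hpW))
          (W.smul_mem _ hpW)) (W.smul_mem _ hqW))
  -- find a nonzero functional annihilating W
  let g : (Fin 3 → ℂ) →ₗ[ℂ] (Fin 2 → ℂ) :=
    { toFun := fun f => ![∑ k, f k * w k, ∑ k, f k * star (w k)]
      map_add' := by
        intro f f'
        funext s
        fin_cases s <;> simp [add_mul, Finset.sum_add_distrib]
      map_smul' := by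
        intro a f
        funext s
        fin_cases s <;> simp [Finset.mul_sum, mul_assoc] }
  have hker : LinearMap.ker g ≠ ⊥ := by
    apply LinearMap.ker_ne_bot_of_finrank_lt (K := ℂ)
    simp [Module.finrank_fin_fun]
  obtain ⟨f, hfker, hf0⟩ := Submodule.exists_mem_ne_zero_of_ne_bot hker
  rw [LinearMap.mem_ker] at hfker
  have hw1 : ∑ k, f k * w k = 0 := by
    have := congrFun hfker 0
    simpa [g] using this
  have hw2 : ∑ k, f k * star (w k) = 0 := by
    have := congrFun hfker 1
    simpa [g] using this
  have hWf : ∀ x ∈ W, ∑ k, f k * x k = 0 := by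
    intro x hx
    rw [hW_def, Submodule.mem_span_pair] at hx
    obtain ⟨a, b, rfl⟩ := hx
    have : ∑ k, f k * (a • w + b • star w) k
        = a * (∑ k, f k * w k) + b * (∑ k, f k * star (w k)) := by
      rw [Finset.mul_sum, Finset.mul_sum, ← Finset.sum_add_distrib]
      refine Finset.sum_congr rfl fun k _ => ?_
      simp only [Pi.add_apply, Pi.smul_apply, Pi.star_apply, smul_eq_mul]
      ring
    rw [this, hw1, hw2]
    ring
  have hcol : ∀ j : Fin n, ∑ k, f k * U (e k) j = 0 := by
    intro j
    exact hWf (v j) (main j.val j.isLt)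
  -- orthonormality of rows
  have hUU : U * star U = 1 := (Matrix.mem_unitaryGroup_iff).mp hU
  have hortho : ∀ a b : Fin n,
      (∑ j, U a j * (starRingEnd ℂ) (U b j)) = if a = b then 1 else 0 := by
    intro a b
    have h := congrFun (congrFun hUU a) b
    simpa [Matrix.mul_apply, Matrix.star_apply, Matrix.one_apply] using h
  have hfz : ∀ k' : Fin 3, f k' = 0 := by
    intro k'
    have h1 : ∑ j, (∑ k, f k * U (e k) j) * (starRingEnd ℂ) (U (e k') j) = 0 :=
      Finset.sum_eq_zero fun j _ => by rw [hcol j, zero_mul]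
    have h2 : ∑ j, (∑ k, f k * U (e k) j) * (starRingEnd ℂ) (U (e k') j)
        = ∑ k, f k * ∑ j, U (e k) j * (starRingEnd ℂ) (U (e k') j) :=
      calc ∑ j, (∑ k, f k * U (e k) j) * (starRingEnd ℂ) (U (e k') j)
          = ∑ j, ∑ k, f k * U (e k) j * (starRingEnd ℂ) (U (e k') j) :=
            Finset.sum_congr rfl fun j _ => by rw [Finset.sum_mul]
        _ = ∑ k, ∑ j, f k * U (e k) j * (starRingEnd ℂ) (U (e k') j) :=
            Finset.sum_comm
        _ = ∑ k, f k * ∑ j, U (e k) j * (starRingEnd ℂ) (U (e k') j) :=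
            Finset.sum_congr rfl fun k _ => by
              rw [Finset.mul_sum]
              exact Finset.sum_congr rfl fun j _ => by ring
    rw [h2] at h1
    have h3 : ∑ k, f k * (∑ j, U (e k) j * (starRingEnd ℂ) (U (e k') j))
        = f k' := by
      rw [Finset.sum_eq_single k']
      · rw [hortho, if_pos rfl, mul_one]
      · intro k _ hk
        rw [hortho, if_neg (fun h => hk (he h)), mul_zero]
      · simp
    rw [h3] at h1
    exact h1
  exact hf0 (funext hfz)
end

section
/- Let μ be a compactly supported Borel probability measure on ℂ. Then there exists a compactly supported symmetric biradial measure ρ on ℂ such that ∫ p dμ = ∫ p dρ for every p of the form p(λ) = u(|λ|²) + v(|λ|²)λ with u, v complex polynomials. -/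
open Complex MeasureTheory ProbabilityTheory
open scoped ProbabilityTheory ENNReal NNReal

/-- Every compactly supported Borel probability measure on `ℂ` agrees with
some compactly supported symmetric biradial measure on all polynomials
`λ ↦ u(|λ|²) + v(|λ|²)λ`. -/
theorem stmt15 (μ : Measure ℂ) (hprob : IsProbabilityMeasure μ)
    (hK : ∃ K : Set ℂ, IsCompact K ∧ μ Kᶜ = 0) :
    ∃ (ρ : Measure ℂ) (ρ₁ ρ₂ : Measure ℝ) (φ : ℝ → ℝ),
      Measurable φ ∧
      ρ₁ (Set.Iio 0) = 0 ∧ ρ₂ (Set.Iio 0) = 0 ∧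
      ρ = ρ₁.map (fun r : ℝ => (r : ℂ) * Complex.exp ((φ r : ℂ) * Complex.I)) +
          ρ₂.map (fun r : ℝ => -((r : ℂ) * Complex.exp ((φ r : ℂ) * Complex.I))) ∧
      (∃ K : Set ℂ, IsCompact K ∧ ρ Kᶜ = 0) ∧
      ∀ u v : Polynomial ℂ,
        ∫ z, (Polynomial.eval (((‖z‖ : ℝ) : ℂ) ^ 2) u +
          Polynomial.eval (((‖z‖ : ℝ) : ℂ) ^ 2) v * z) ∂μ =
        ∫ z, (Polynomial.eval (((‖z‖ : ℝ) : ℂ) ^ 2) u +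
          Polynomial.eval (((‖z‖ : ℝ) : ℂ) ^ 2) v * z) ∂ρ := by
  classical
  obtain ⟨K, hKc, hKn⟩ := hK
  obtain ⟨R', hR'⟩ := hKc.isBounded.subset_closedBall 0
  set R : ℝ := max R' 0 with hRdef
  have hR0 : (0:ℝ) ≤ R := le_max_right _ _
  have hKR : K ⊆ Metric.closedBall 0 R :=
    hR'.trans (Metric.closedBall_subset_closedBall (le_max_left _ _))
  -- the embedding into the graph
  have habs : Measurable (fun z : ℂ => ‖z‖) := continuous_norm.measurable
  set e : ℂ → ℝ × ℂ := fun z => (‖z‖, z) with he_def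
  have he : Measurable e := habs.prodMk measurable_id
  set ρ0 : Measure (ℝ × ℂ) := μ.map e with hρ0_def
  haveI : IsProbabilityMeasure ρ0 := Measure.isProbabilityMeasure_map he.aemeasurable
  set ν : Measure ℝ := ρ0.fst with hν_def
  set κ := ρ0.condKernel with hκ_def
  have hν : ν = μ.map (fun z : ℂ => ‖z‖) := by
    rw [hν_def, Measure.fst, hρ0_def, Measure.map_map measurable_fst he]
    rfl
  haveI : IsProbabilityMeasure ν := by
    rw [hν]; exact Measure.isProbabilityMeasure_map habs.aemeasurable
  have hdis : ν ⊗ₘ κ = ρ0 := ρ0.disintegrate _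
  -- a.e. facts for ν
  have hνIcc : ν ((Set.Icc (0:ℝ) R)ᶜ) = 0 := by
    rw [hν, Measure.map_apply habs (measurableSet_Icc.compl)]
    refine measure_mono_null ?_ hKn
    intro z hz
    simp only [Set.mem_preimage, Set.mem_compl_iff, Set.mem_Icc, not_and_or, not_le] at hz ⊢
    intro hzK
    have := hKR hzK
    rw [Metric.mem_closedBall, Complex.dist_eq, sub_zero] at this
    rcases hz with h | h
    · exact absurd (norm_nonneg z) (not_le.mpr h)
    · exact absurd this (not_le.mpr h)
  have hae_r : ∀ᵐ r ∂ν, r ∈ Set.Icc (0:ℝ) R := by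
    rw [ae_iff]
    exact hνIcc
  -- the graph property
  have hSm : MeasurableSet {p : ℝ × ℂ | ‖p.2‖ = p.1} :=
    measurableSet_eq_fun (habs.comp measurable_snd) measurable_fst
  have hρ0S : ρ0 {p : ℝ × ℂ | ‖p.2‖ = p.1}ᶜ = 0 := by
    rw [hρ0_def, Measure.map_apply he hSm.compl]
    have : e ⁻¹' {p : ℝ × ℂ | ‖p.2‖ = p.1}ᶜ = ∅ := by
      ext z; simp [he_def]
    rw [this]
    exact measure_empty
  have hae_graph : ∀ᵐ p ∂ρ0, ‖p.2‖ = p.1 := by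
    rw [ae_iff]; exact hρ0S
  have hκfiber : ∀ᵐ r ∂ν, ∀ᵐ z ∂(κ r), ‖z‖ = r := by
    have h0 : (ν ⊗ₘ κ) {p : ℝ × ℂ | ‖p.2‖ = p.1}ᶜ = 0 := by
      rw [hdis]; exact hρ0S
    rw [Measure.compProd_apply hSm.compl] at h0
    have h2 := (lintegral_eq_zero_iff
      (ProbabilityTheory.Kernel.measurable_kernel_prodMk_left hSm.compl)).mp h0
    filter_upwards [h2] with r hr
    rw [ae_iff]
    simpa [Set.compl_setOf] using hr
  -- the conditional barycenter
  set h : ℝ → ℂ := fun r => ∫ z, z ∂(κ r) with hh_def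
  have hhm : Measurable h := by
    have : StronglyMeasurable fun r => ∫ z, (fun (_ : ℝ) (w : ℂ) => w) r z ∂(κ r) :=
      MeasureTheory.StronglyMeasurable.integral_kernel_prod_right
        (by exact measurable_snd.stronglyMeasurable)
    exact this.measurable
  set φ : ℝ → ℝ := fun r => (h r).arg with hφ_def
  have hφm : Measurable φ := Complex.measurable_arg.comp hhm
  set T : ℝ → ℂ := fun r => (r : ℂ) * Complex.exp ((φ r : ℂ) * Complex.I) with hT_def
  have hTm : Measurable T :=
    Complex.measurable_ofReal.mul
      (Complex.measurable_exp.comp ((Complex.measurable_ofReal.comp hφm).mul_const I))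
  have hTabs : ∀ r, ‖T r‖ = |r| := by
    intro r
    rw [hT_def]
    simp only [norm_mul, Complex.norm_exp_ofReal_mul_I, mul_one, Complex.norm_real, Real.norm_eq_abs]
  -- weights
  set s : ℝ → ℝ := fun r => if r = 0 then 0 else ‖h r‖ / r with hs_def
  have hsm : Measurable s := by
    refine Measurable.ite (measurableSet_eq) measurable_const ?_
    exact (hhm.norm).div measurable_id
  set W₁ : ℝ → ℝ≥0 := fun r => Real.toNNReal ((1 + s r)/2) with hW₁_def
  set W₂ : ℝ → ℝ≥0 := fun r => Real.toNNReal ((1 - s r)/2) with hW₂_def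
  have hW₁m : Measurable W₁ := measurable_real_toNNReal.comp ((measurable_const.add hsm).div_const 2)
  have hW₂m : Measurable W₂ := measurable_real_toNNReal.comp ((measurable_const.sub hsm).div_const 2)
  set ρ₁ : Measure ℝ := ν.withDensity (fun r => (W₁ r : ℝ≥0∞)) with hρ₁_def
  set ρ₂ : Measure ℝ := ν.withDensity (fun r => (W₂ r : ℝ≥0∞)) with hρ₂_def
  -- the key a.e. facts
  have hInt : ∀ᵐ r ∂ν, Integrable (fun z : ℂ => z) (κ r) ∧ ‖h r‖ ≤ r := by
    filter_upwards [hκfiber, hae_r] with r hfib hIcc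
    haveI : IsProbabilityMeasure (κ r) := inferInstance
    have hint : Integrable (fun z : ℂ => z) (κ r) := by
      refine Integrable.mono' (integrable_const R) aestronglyMeasurable_id ?_
      filter_upwards [hfib] with z hz
      rw [hz]
      exact hIcc.2
    refine ⟨hint, ?_⟩
    calc ‖∫ z, z ∂(κ r)‖ ≤ ∫ z, ‖z‖ ∂(κ r) := norm_integral_le_integral_norm _
    _ = ∫ _, r ∂(κ r) := by
        refine integral_congr_ae ?_
        filter_upwards [hfib] with z hz
        rw [hz]
    _ = r := by simp
  have hkey : ∀ᵐ r ∂ν, r ∈ Set.Icc (0:ℝ) R ∧ Integrable (fun z : ℂ => z) (κ r) ∧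
      ((W₁ r : ℝ) + (W₂ r : ℝ) = 1 ∧ ((W₁ r : ℝ) - (W₂ r : ℝ)) • T r = h r) ∧
      ((W₁ r : ℝ≥0∞) ≤ 1 ∧ (W₂ r : ℝ≥0∞) ≤ 1) := by
    filter_upwards [hae_r, hInt] with r hIcc ⟨hint, hnorm⟩
    have hs01 : 0 ≤ s r ∧ s r ≤ 1 := by
      rcases eq_or_lt_of_le hIcc.1 with h0 | h0
      · have hsr : s r = 0 := by rw [hs_def]; simp [← h0]
        rw [hsr]; norm_num
      · have hsr : s r = ‖h r‖ / r := by rw [hs_def]; simp [h0.ne']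
        rw [hsr]
        exact ⟨div_nonneg (norm_nonneg _) h0.le, (div_le_one h0).mpr hnorm⟩
    have hc₁ : (W₁ r : ℝ) = (1 + s r)/2 := Real.coe_toNNReal _ (by linarith [hs01.1])
    have hc₂ : (W₂ r : ℝ) = (1 - s r)/2 := Real.coe_toNNReal _ (by linarith [hs01.2])
    refine ⟨hIcc, hint, ⟨by rw [hc₁, hc₂]; ring, ?_⟩, ?_, ?_⟩
    · have hdiff : (W₁ r : ℝ) - (W₂ r : ℝ) = s r := by rw [hc₁, hc₂]; ring
      rw [hdiff]
      rcases eq_or_lt_of_le hIcc.1 with h0 | h0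
      · have hz : h r = 0 := by
          rw [← norm_le_zero_iff]
          exact hnorm.trans (le_of_eq h0.symm)
        have hsr : s r = 0 := by rw [hs_def]; simp [← h0]
        rw [hsr, hz, zero_smul]
      · have hsr : s r = ‖h r‖ / r := by rw [hs_def]; simp [h0.ne']
        rw [hsr, Complex.real_smul, hT_def]
        have : ((‖h r‖ / r : ℝ) : ℂ) * ((r : ℂ) * Complex.exp ((φ r : ℂ) * Complex.I))
            = (‖h r‖ : ℂ) * Complex.exp ((φ r : ℂ) * Complex.I) := by
          have hr0 : (r : ℂ) ≠ 0 := by exact_mod_cast h0.ne'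
          push_cast
          field_simp
        rw [this, hφ_def, Complex.norm_mul_exp_arg_mul_I]
    · refine ENNReal.coe_le_one_iff.mpr ?_
      simp only [hW₁_def]
      exact Real.toNNReal_le_iff_le_coe.mpr (by push_cast; linarith [hs01.2])
    · refine ENNReal.coe_le_one_iff.mpr ?_
      simp only [hW₂_def]
      exact Real.toNNReal_le_iff_le_coe.mpr (by push_cast; linarith [hs01.1])
  -- finiteness of ρ₁ ρ₂
  have hfin : ∀ (W : ℝ → ℝ≥0), Measurable W → (∀ᵐ r ∂ν, (W r : ℝ≥0∞) ≤ 1) →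
      IsFiniteMeasure (ν.withDensity (fun r => (W r : ℝ≥0∞))) := by
    intro W hWm hW1
    constructor
    rw [withDensity_apply _ MeasurableSet.univ, Measure.restrict_univ]
    calc ∫⁻ r, (W r : ℝ≥0∞) ∂ν ≤ ∫⁻ _, 1 ∂ν := lintegral_mono_ae hW1
    _ = 1 := by simp
    _ < ⊤ := ENNReal.one_lt_top
  haveI hρ₁fin : IsFiniteMeasure ρ₁ := hfin W₁ hW₁m (by filter_upwards [hkey] with r hk using hk.2.2.2.1)
  haveI hρ₂fin : IsFiniteMeasure ρ₂ := hfin W₂ hW₂m (by filter_upwards [hkey] with r hk using hk.2.2.2.2)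
  -- support facts for ρ₁ ρ₂
  have hacρ₁ : ρ₁ ≪ ν := withDensity_absolutelyContinuous ν _
  have hacρ₂ : ρ₂ ≪ ν := withDensity_absolutelyContinuous ν _
  have hρ₁Icc : ρ₁ ((Set.Icc (0:ℝ) R)ᶜ) = 0 := hacρ₁ hνIcc
  have hρ₂Icc : ρ₂ ((Set.Icc (0:ℝ) R)ᶜ) = 0 := hacρ₂ hνIcc
  have hIio : Set.Iio (0:ℝ) ⊆ (Set.Icc (0:ℝ) R)ᶜ := by
    intro r hr
    simp only [Set.mem_Iio] at hr
    simp only [Set.mem_compl_iff, Set.mem_Icc, not_and_or, not_le]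
    exact Or.inl hr
  refine ⟨ρ₁.map T + ρ₂.map (fun r => -(T r)), ρ₁, ρ₂, φ, hφm,
    measure_mono_null hIio hρ₁Icc, measure_mono_null hIio hρ₂Icc, rfl, ?_, ?_⟩
  · -- compact support
    refine ⟨Metric.closedBall 0 R, isCompact_closedBall _ _, ?_⟩
    have hsub : ∀ g : ℝ → ℂ, (∀ r, ‖g r‖ = |r|) →
        g ⁻¹' (Metric.closedBall (0:ℂ) R)ᶜ ⊆ (Set.Icc (0:ℝ) R)ᶜ := by
      intro g hg r hr
      simp only [Set.mem_preimage, Set.mem_compl_iff, Metric.mem_closedBall, Complex.dist_eq,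
        sub_zero, not_le] at hr
      simp only [Set.mem_compl_iff, Set.mem_Icc, not_and_or, not_le]
      rw [hg r] at hr
      by_contra hcon
      push_neg at hcon
      rw [_root_.abs_of_nonneg hcon.1] at hr
      exact absurd hcon.2 (not_le.mpr hr)
    rw [Measure.add_apply, Measure.map_apply hTm (Metric.isClosed_closedBall.measurableSet).compl,
      Measure.map_apply (show Measurable (fun r => -(T r)) from hTm.neg) (Metric.isClosed_closedBall.measurableSet).compl]
    rw [measure_mono_null (hsub T hTabs) hρ₁Icc,
      measure_mono_null (hsub (fun r => -(T r)) (by intro r; rw [norm_neg]; exact hTabs r)) hρ₂Icc]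
    simp
  · -- the moment identity
    intro u v
    set A : ℝ → ℂ := fun r => Polynomial.eval ((r:ℂ)^2) u with hA_def
    set B : ℝ → ℂ := fun r => Polynomial.eval ((r:ℂ)^2) v with hB_def
    have hAc : Continuous A := u.continuous.comp (Complex.continuous_ofReal.pow 2)
    have hBc : Continuous B := v.continuous.comp (Complex.continuous_ofReal.pow 2)
    set F : ℂ → ℂ := fun z =>
      Polynomial.eval (((‖z‖ : ℝ) : ℂ) ^ 2) u +
        Polynomial.eval (((‖z‖ : ℝ) : ℂ) ^ 2) v * z with hF_def
    have hFc : Continuous F := by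
      refine Continuous.add ?_ (Continuous.mul ?_ continuous_id)
      · exact hAc.comp continuous_norm
      · exact hBc.comp continuous_norm
    have hFe : ∀ z, F z = A ‖z‖ + B ‖z‖ * z := fun z => rfl
    -- the uniform bound
    obtain ⟨r₀, hr₀, hC⟩ := isCompact_Icc.exists_isMaxOn (Set.nonempty_Icc.mpr hR0)
      ((hAc.norm.add (hBc.norm.mul continuous_const)).continuousOn :
        ContinuousOn (fun r : ℝ => ‖A r‖ + ‖B r‖ * R) (Set.Icc 0 R))
    set C : ℝ := ‖A r₀‖ + ‖B r₀‖ * R with hC_def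
    have hbound : ∀ r ∈ Set.Icc (0:ℝ) R, ∀ z : ℂ, ‖z‖ ≤ R → ‖A r + B r * z‖ ≤ C := by
      intro r hr z hz
      calc ‖A r + B r * z‖ ≤ ‖A r‖ + ‖B r * z‖ := norm_add_le _ _
      _ = ‖A r‖ + ‖B r‖ * ‖z‖ := by rw [norm_mul]
      _ ≤ ‖A r‖ + ‖B r‖ * R :=
          (add_le_add_iff_left _).mpr (mul_le_mul_of_nonneg_left hz (norm_nonneg _))
      _ ≤ C := hC hr
    -- identities for F ∘ T
    have hsq : ∀ r : ℝ, (((|r| : ℝ) : ℂ))^2 = ((r : ℝ) : ℂ)^2 := by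
      intro r
      rw [← Complex.ofReal_pow, ← Complex.ofReal_pow, _root_.sq_abs]
    have hFT : ∀ r, F (T r) = A r + B r * T r := by
      intro r
      rw [hFe, hTabs]
      simp only [hA_def, hB_def]
      rw [hsq]
    have hFT' : ∀ r, F (-(T r)) = A r + B r * -(T r) := by
      intro r
      rw [hFe, norm_neg, hTabs]
      simp only [hA_def, hB_def]
      rw [hsq]
    -- the pair function
    set f : ℝ × ℂ → ℂ := fun p => A p.1 + B p.1 * p.2 with hf_def
    have hfc : Continuous f :=
      Continuous.add (hAc.comp continuous_fst) ((hBc.comp continuous_fst).mul continuous_snd)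
    -- integrability of f over ρ0
    have hae_p : ∀ᵐ p ∂ρ0, p.1 ∈ Set.Icc (0:ℝ) R ∧ ‖p.2‖ = p.1 := by
      have h1 : ∀ᵐ p ∂ρ0, p.1 ∈ Set.Icc (0:ℝ) R := by
        have h0 : (ν ⊗ₘ κ) ((Prod.fst ⁻¹' Set.Icc (0:ℝ) R : Set (ℝ × ℂ))ᶜ) = 0 := by
          rw [Measure.compProd_apply (measurableSet_Icc.preimage measurable_fst).compl]
          rw [← lintegral_zero]
          refine lintegral_congr_ae ?_
          filter_upwards [hae_r] with r hr
          have hpre : Prod.mk r ⁻¹' (Prod.fst ⁻¹' Set.Icc (0:ℝ) R : Set (ℝ × ℂ))ᶜ = ∅ := by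
            ext z; simp [hr]
          rw [hpre]; simp
        rw [← hdis, ae_iff]
        exact h0
      filter_upwards [h1, hae_graph] with p h1 h2 using ⟨h1, h2⟩
    have hfint : Integrable f ρ0 := by
      refine Integrable.mono' (integrable_const C) hfc.aestronglyMeasurable ?_
      filter_upwards [hae_p] with p ⟨hp1, hp2⟩
      refine hbound p.1 hp1 p.2 ?_
      rw [hp2]
      exact hp1.2
    -- LHS computation
    have step1 : ∫ z, F z ∂μ = ∫ p, f p ∂ρ0 := by
      rw [hρ0_def, integral_map he.aemeasurable hfc.aestronglyMeasurable]
    have step3 : ∫ p, f p ∂ρ0 = ∫ r, ∫ z, f (r, z) ∂(κ r) ∂ν := by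
      conv_lhs => rw [← hdis]
      exact Measure.integral_compProd (by rwa [hdis])
    have step4 : ∫ r, ∫ z, f (r, z) ∂(κ r) ∂ν = ∫ r, (A r + B r * h r) ∂ν := by
      refine integral_congr_ae ?_
      filter_upwards [hkey] with r hk
      haveI : IsProbabilityMeasure (κ r) := inferInstance
      have hint := hk.2.1
      have : (fun z : ℂ => f (r, z)) = fun z => A r + B r * z := rfl
      rw [this]
      rw [integral_add (integrable_const _) (hint.const_mul (B r)), integral_const]
      simp only [probReal_univ, one_smul]
      congr 1
      simp_rw [← smul_eq_mul]
      rw [integral_smul]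
    -- integrability of A + B h over ν
    have hABh_int : Integrable (fun r => A r + B r * h r) ν := by
      refine Integrable.mono' (integrable_const C) ?_ ?_
      · exact ((hAc.measurable.comp measurable_id).add
          ((hBc.measurable.comp measurable_id).mul hhm)).aestronglyMeasurable
      · filter_upwards [hkey, hInt] with r hk hI
        refine hbound r hk.1 (h r) ?_
        exact hI.2.trans hk.1.2
    -- RHS computation
    have haeρ₁ : ∀ᵐ r ∂ρ₁, r ∈ Set.Icc (0:ℝ) R := hacρ₁.ae_le hae_r
    have haeρ₂ : ∀ᵐ r ∂ρ₂, r ∈ Set.Icc (0:ℝ) R := hacρ₂.ae_le hae_r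
    have hnormT : ∀ r ∈ Set.Icc (0:ℝ) R, ‖T r‖ ≤ R := by
      intro r hr
      rw [hTabs, _root_.abs_of_nonneg hr.1]
      exact hr.2
    have hFTbound : ∀ r ∈ Set.Icc (0:ℝ) R, ‖F (T r)‖ ≤ C := by
      intro r hr
      rw [hFT]
      exact hbound r hr (T r) (hnormT r hr)
    have hFTbound' : ∀ r ∈ Set.Icc (0:ℝ) R, ‖F (-(T r))‖ ≤ C := by
      intro r hr
      rw [hFT']
      refine hbound r hr (-(T r)) ?_
      rw [norm_neg]
      exact hnormT r hr
    have h₁int : Integrable F (ρ₁.map T) := by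
      rw [integrable_map_measure hFc.aestronglyMeasurable hTm.aemeasurable]
      refine Integrable.mono' (integrable_const C)
        (hFc.measurable.comp hTm).aestronglyMeasurable ?_
      filter_upwards [haeρ₁] with r hr using hFTbound r hr
    have h₂int : Integrable F (ρ₂.map (fun r => -(T r))) := by
      rw [integrable_map_measure hFc.aestronglyMeasurable (show Measurable (fun r => -(T r)) from hTm.neg).aemeasurable]
      refine Integrable.mono' (integrable_const C)
        (hFc.measurable.comp hTm.neg).aestronglyMeasurable ?_
      filter_upwards [haeρ₂] with r hr using hFTbound' r hr
    have rhs1 : ∫ z, F z ∂(ρ₁.map T + ρ₂.map (fun r => -(T r)))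
        = ∫ z, F z ∂(ρ₁.map T) + ∫ z, F z ∂(ρ₂.map (fun r => -(T r))) :=
      integral_add_measure h₁int h₂int
    have rhs2 : ∫ z, F z ∂(ρ₁.map T) = ∫ r, (W₁ r : ℝ) • F (T r) ∂ν := by
      rw [integral_map hTm.aemeasurable hFc.aestronglyMeasurable, hρ₁_def,
        integral_withDensity_eq_integral_smul hW₁m]
      simp_rw [NNReal.smul_def]
    have rhs3 : ∫ z, F z ∂(ρ₂.map (fun r => -(T r))) = ∫ r, (W₂ r : ℝ) • F (-(T r)) ∂ν := by
      rw [integral_map (show Measurable (fun r => -(T r)) from hTm.neg).aemeasurable hFc.aestronglyMeasurable, hρ₂_def,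
        integral_withDensity_eq_integral_smul hW₂m]
      simp_rw [NNReal.smul_def]
    have hW₁le : ∀ᵐ r ∂ν, (W₁ r : ℝ) ≤ 1 := by
      filter_upwards [hkey] with r hk
      have := ENNReal.coe_le_one_iff.mp hk.2.2.2.1
      exact_mod_cast this
    have hW₂le : ∀ᵐ r ∂ν, (W₂ r : ℝ) ≤ 1 := by
      filter_upwards [hkey] with r hk
      have := ENNReal.coe_le_one_iff.mp hk.2.2.2.2
      exact_mod_cast this
    have hint₁ : Integrable (fun r => (W₁ r : ℝ) • F (T r)) ν := by
      refine Integrable.mono' (integrable_const C) ?_ ?_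
      · exact ((hW₁m.coe_nnreal_real).smul
          (hFc.measurable.comp hTm)).aestronglyMeasurable
      · filter_upwards [hae_r, hW₁le] with r hr hW
        rw [norm_smul, Real.norm_eq_abs, _root_.abs_of_nonneg (W₁ r).coe_nonneg]
        calc (W₁ r : ℝ) * ‖F (T r)‖ ≤ 1 * C :=
          mul_le_mul hW (hFTbound r hr) (norm_nonneg _) zero_le_one
        _ = C := one_mul C
    have hint₂ : Integrable (fun r => (W₂ r : ℝ) • F (-(T r))) ν := by
      refine Integrable.mono' (integrable_const C) ?_ ?_
      · exact ((hW₂m.coe_nnreal_real).smul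
          (hFc.measurable.comp hTm.neg)).aestronglyMeasurable
      · filter_upwards [hae_r, hW₂le] with r hr hW
        rw [norm_smul, Real.norm_eq_abs, _root_.abs_of_nonneg (W₂ r).coe_nonneg]
        calc (W₂ r : ℝ) * ‖F (-(T r))‖ ≤ 1 * C :=
          mul_le_mul hW (hFTbound' r hr) (norm_nonneg _) zero_le_one
        _ = C := one_mul C
    have rhs4 : ∫ r, (W₁ r : ℝ) • F (T r) ∂ν + ∫ r, (W₂ r : ℝ) • F (-(T r)) ∂ν
        = ∫ r, ((W₁ r : ℝ) • F (T r) + (W₂ r : ℝ) • F (-(T r))) ∂ν :=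
      (integral_add hint₁ hint₂).symm
    have rhs5 : ∫ r, ((W₁ r : ℝ) • F (T r) + (W₂ r : ℝ) • F (-(T r))) ∂ν
        = ∫ r, (A r + B r * h r) ∂ν := by
      refine integral_congr_ae ?_
      filter_upwards [hkey] with r hk
      obtain ⟨_, _, ⟨hsum, hdiff⟩, _⟩ := hk
      rw [hFT, hFT', Complex.real_smul, Complex.real_smul]
      rw [Complex.real_smul] at hdiff
      have hsumC : ((W₁ r : ℝ) : ℂ) + ((W₂ r : ℝ) : ℂ) = 1 := by exact_mod_cast hsum
      have hdiffC : (((W₁ r : ℝ) : ℂ) - ((W₂ r : ℝ) : ℂ)) * T r = h r := by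
        push_cast at hdiff ⊢
        exact hdiff
      linear_combination (A r) * hsumC + (B r) * hdiffC
    calc ∫ z, F z ∂μ = ∫ r, (A r + B r * h r) ∂ν := by rw [step1, step3, step4]
    _ = ∫ z, F z ∂(ρ₁.map T + ρ₂.map (fun r => -(T r))) := by
        rw [rhs1, rhs2, rhs3, rhs4, rhs5]
end

section
/- Let ρ = Σ_{k=1}^n ρ_k δ_{λ_k} and ρ' = Σ_{k=1}^n ρ'_k δ_{λ'_k} be two discrete probability measures on ℂ with weights ρ_k, ρ'_k > 0 and distinct support points. Then ∫ λ^{⟨j⟩} dρ = ∫ λ^{⟨j⟩} dρ' for all j = 0, 1, …, 2n−1 if, for each r ≥ 0, the total mass of ρ on the circle {|λ| = r} equals that of ρ' and the centre of mass Σ_{|λ_k|=r} ρ_k λ_k equals Σ_{|λ'_k|=r} ρ'_k λ'_k. -/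
open Complex
open scoped Classical

/-- Two discrete measures with equal per-circle masses and per-circle
centres of mass have the same moments `∫ λ^⟨j⟩` for `j = 0, …, 2n − 1`. -/
theorem stmt19 (n : ℕ) (l l' : Fin n → ℂ) (hl : Function.Injective l)
    (hl' : Function.Injective l')
    (ρ ρ' : Fin n → ℝ) (hρ : ∀ k, 0 < ρ k) (hρ' : ∀ k, 0 < ρ' k)
    (hsum : ∑ k, ρ k = 1) (hsum' : ∑ k, ρ' k = 1)
    (hmass : ∀ r : ℝ,
      ∑ k ∈ Finset.univ.filter (fun k => ‖l k‖ = r), ρ k =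
      ∑ k ∈ Finset.univ.filter (fun k => ‖l' k‖ = r), ρ' k)
    (hcm : ∀ r : ℝ,
      ∑ k ∈ Finset.univ.filter (fun k => ‖l k‖ = r), (ρ k : ℂ) * l k =
      ∑ k ∈ Finset.univ.filter (fun k => ‖l' k‖ = r), (ρ' k : ℂ) * l' k) :
    ∀ j < 2 * n,
      ∑ k, (ρ k : ℂ) * (if j % 2 = 0 then ((‖l k‖ : ℝ) : ℂ) ^ j
        else l k * ((‖l k‖ : ℝ) : ℂ) ^ (j - 1)) =
      ∑ k, (ρ' k : ℂ) * (if j % 2 = 0 then ((‖l' k‖ : ℝ) : ℂ) ^ j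
        else l' k * ((‖l' k‖ : ℝ) : ℂ) ^ (j - 1)) := by
  intro j hj
  classical
  set S := (Finset.univ.image fun k => ‖l k‖) ∪
    (Finset.univ.image fun k => ‖l' k‖) with hSdef
  have key : ∀ (m : Fin n → ℂ) (w : Fin n → ℝ),
      (∀ k : Fin n, ‖m k‖ ∈ S) →
      ∑ k, (w k : ℂ) * (if j % 2 = 0 then ((‖m k‖ : ℝ) : ℂ) ^ j
        else m k * ((‖m k‖ : ℝ) : ℂ) ^ (j - 1)) =
      ∑ r ∈ S, (if j % 2 = 0 then
          (((∑ k ∈ Finset.univ.filter (fun k => ‖m k‖ = r), w k : ℝ)) : ℂ)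
            * (r : ℂ) ^ j
        else (∑ k ∈ Finset.univ.filter (fun k => ‖m k‖ = r), (w k : ℂ) * m k)
            * (r : ℂ) ^ (j - 1)) := by
    intro m w hm
    rw [← Finset.sum_fiberwise_of_maps_to (g := fun k => ‖m k‖) (fun k _ => hm k)]
    refine Finset.sum_congr rfl fun r _ => ?_
    by_cases hpar : j % 2 = 0
    · simp only [hpar, if_true]
      push_cast
      rw [Finset.sum_mul]
      refine Finset.sum_congr rfl fun k hk => ?_
      rw [(Finset.mem_filter.mp hk).2]
    · simp only [hpar, if_false]
      rw [Finset.sum_mul]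
      refine Finset.sum_congr rfl fun k hk => ?_
      rw [(Finset.mem_filter.mp hk).2, mul_assoc]
  rw [key l ρ (fun k => Finset.mem_union_left _ (Finset.mem_image_of_mem _ (Finset.mem_univ k))),
    key l' ρ' (fun k => Finset.mem_union_right _ (Finset.mem_image_of_mem _ (Finset.mem_univ k)))]
  refine Finset.sum_congr rfl fun r _ => ?_
  by_cases hpar : j % 2 = 0
  · simp only [hpar, if_true, hmass r]
  · simp only [hpar, if_false, hcm r]
end
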